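/- arXiv:math/9908016 — 8 statements merged into one kernel-verified Lean document; each statement's English description precedes it below -/
import Mathlib

section
/- The map J from C_{p,m} to the set of strictly increasing p-tuples of positive integers J = (j_1 < j_2 < ... < j_p) satisfying j_p - (m+p) < j_1, defined by writing a = pl + r with 0 ≤ r < p and setting J(α^{(a)})_i = l(m+p) + α_{r+i} for 1 ≤ i ≤ p-r and J(α^{(a)})_i = (l+1)(m+p) + α_{i-p+r} for p-r < i ≤ p, is a bijection. -/
def QRow (p m : ℕ) : Type :=
  {α : Fin p → ℕ // StrictMono α ∧ ∀ i, 1 ≤ α i ∧ α i ≤ m + p}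

def QElt (p m : ℕ) : Type := QRow p m × ℕ

/-- The map `J` on `C_{p,m}` : writing `a = p·l + r` with `0 ≤ r < p`,
`J(α^{(a)})_i = l(m+p) + α_{r+i}` for `1 ≤ i ≤ p-r` and
`J(α^{(a)})_i = (l+1)(m+p) + α_{i-p+r}` for `p-r < i ≤ p` (0-based below). -/
def Jmap {p m : ℕ} (x : QElt p m) : Fin p → ℕ := fun i =>
  if h : (i : ℕ) < p - x.2 % p then
    (x.2 / p) * (m + p) + x.1.1 ⟨x.2 % p + i, by
      have h1 := i.isLt; have h2 := Nat.mod_lt x.2 i.pos; omega⟩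
  else
    (x.2 / p + 1) * (m + p) + x.1.1 ⟨(i : ℕ) - (p - x.2 % p), by
      have h1 := i.isLt; omega⟩

lemma Jmap_eval_lt {p m : ℕ} (x : QElt p m) (i : Fin p) (h : (i : ℕ) < p - x.2 % p) :
    Jmap x i = (x.2 / p) * (m + p) + x.1.1 ⟨x.2 % p + i, by
      have h1 := i.isLt; have h2 := Nat.mod_lt x.2 i.pos; omega⟩ := by
  simp only [Jmap]; rw [dif_pos h]

lemma Jmap_eval_ge {p m : ℕ} (x : QElt p m) (i : Fin p) (h : ¬ (i : ℕ) < p - x.2 % p) :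
    Jmap x i = (x.2 / p + 1) * (m + p) + x.1.1 ⟨(i : ℕ) - (p - x.2 % p), by
      have h1 := i.isLt; omega⟩ := by
  simp only [Jmap]; rw [dif_neg h]

lemma row_congr' {p m : ℕ} (α : QRow p m) {v : ℕ} (hv : v < p) (j : Fin p)
    (h : v = (j : ℕ)) : α.1 ⟨v, hv⟩ = α.1 j :=
  congrArg α.1 (Fin.ext h)

lemma div_aux {q la lb u v : ℕ} (hq : 0 < q) (hu : 1 ≤ u) (hu2 : u ≤ q)
    (hv : 1 ≤ v) (hv2 : v ≤ q) (h : la * q + u = lb * q + v) : la = lb ∧ u = v := by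
  have key : ∀ x y : ℕ, 1 ≤ y → y ≤ q → (x * q + y - 1) / q = x := by
    intro x y h1 h2
    have e : x * q + y - 1 = q * x + (y - 1) := by rw [Nat.mul_comm]; omega
    rw [e, Nat.mul_add_div hq, Nat.div_eq_of_lt (by omega)]; omega
  have h1 := key la u hu hu2
  have h2 := key lb v hv hv2
  rw [h] at h1
  have hl : la = lb := h1.symm.trans h2
  subst hl
  exact ⟨rfl, by omega⟩

lemma pred_lt_aux {p : ℕ} (hp : 0 < p) : p - 1 < p := by omega

lemma Jmap_mapsTo {p m : ℕ} (hp : 0 < p) (hm : 0 < m) (x : QElt p m) :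
    StrictMono (Jmap x) ∧ (∀ i, 1 ≤ Jmap x i) ∧
      Jmap x ⟨p - 1, pred_lt_aux hp⟩ < Jmap x ⟨0, hp⟩ + (m + p) := by
  have hr : x.2 % p < p := Nat.mod_lt _ hp
  have hsm := x.1.2.1
  have hb := x.1.2.2
  have e1 : (x.2 / p + 1) * (m + p) = x.2 / p * (m + p) + (m + p) := by ring
  refine ⟨?_, ?_, ?_⟩
  · intro i j hij
    have hij' : (i : ℕ) < (j : ℕ) := hij
    have hiLt := i.isLt
    have hjLt := j.isLt
    by_cases hi : (i : ℕ) < p - x.2 % p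
    · by_cases hj : (j : ℕ) < p - x.2 % p
      · rw [Jmap_eval_lt x i hi, Jmap_eval_lt x j hj]
        exact Nat.add_lt_add_left (hsm (Fin.mk_lt_mk.mpr (by omega))) _
      · rw [Jmap_eval_lt x i hi, Jmap_eval_ge x j hj]
        have b1 := hb ⟨x.2 % p + (i : ℕ), by omega⟩
        have b2 := hb ⟨(j : ℕ) - (p - x.2 % p), by omega⟩
        omega
    · have hj : ¬ (j : ℕ) < p - x.2 % p := by omega
      rw [Jmap_eval_ge x i hi, Jmap_eval_ge x j hj]
      exact Nat.add_lt_add_left (hsm (Fin.mk_lt_mk.mpr (by omega))) _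
  · intro i
    have hiLt := i.isLt
    by_cases hi : (i : ℕ) < p - x.2 % p
    · rw [Jmap_eval_lt x i hi]
      have b1 := hb ⟨x.2 % p + (i : ℕ), by omega⟩
      omega
    · rw [Jmap_eval_ge x i hi]
      have b1 := hb ⟨(i : ℕ) - (p - x.2 % p), by omega⟩
      omega
  · rw [Jmap_eval_lt x ⟨0, hp⟩ (by show (0:ℕ) < p - x.2 % p; omega)]
    by_cases hc : x.2 % p = 0
    · rw [Jmap_eval_lt x ⟨p - 1, by omega⟩ (by show p - 1 < p - x.2 % p; omega)]
      dsimp only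
      have b1 := hb ⟨x.2 % p + (p - 1), by omega⟩
      have b2 := hb ⟨x.2 % p + 0, by omega⟩
      omega
    · rw [Jmap_eval_ge x ⟨p - 1, by omega⟩ (by show ¬ (p - 1 < p - x.2 % p); omega)]
      dsimp only
      have hlt : x.1.1 ⟨p - 1 - (p - x.2 % p), by omega⟩ < x.1.1 ⟨x.2 % p + 0, by omega⟩ :=
        hsm (Fin.mk_lt_mk.mpr (by omega))
      have b1 := hb ⟨p - 1 - (p - x.2 % p), by omega⟩
      have b2 := hb ⟨x.2 % p + 0, by omega⟩
      omega


lemma mod_lt_aux {p m : ℕ} (hp : 0 < p) (x y : QElt p m) (hxy : Jmap x = Jmap y)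
    (hdiv : x.2 / p = y.2 / p) (hlt : x.2 % p < y.2 % p) : False := by
  have hry : y.2 % p < p := Nat.mod_lt _ hp
  have hi : p - y.2 % p < p := by omega
  have h := congrFun hxy ⟨p - y.2 % p, hi⟩
  rw [Jmap_eval_lt x ⟨p - y.2 % p, hi⟩ (by show p - y.2 % p < p - x.2 % p; omega),
      Jmap_eval_ge y ⟨p - y.2 % p, hi⟩ (by show ¬ (p - y.2 % p < p - y.2 % p); omega)] at h
  dsimp only at h
  have e1 : (y.2 / p + 1) * (m + p) = y.2 / p * (m + p) + (m + p) := by ring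
  have e2 : x.2 / p * (m + p) = y.2 / p * (m + p) := by rw [hdiv]
  have b1 := x.1.2.2 ⟨x.2 % p + (p - y.2 % p), by omega⟩
  have b2 := y.1.2.2 ⟨p - y.2 % p - (p - y.2 % p), by omega⟩
  omega

lemma Jmap_inj {p m : ℕ} (hp : 0 < p) (hm : 0 < m) (x y : QElt p m)
    (hxy : Jmap x = Jmap y) : x = y := by
  have hrx : x.2 % p < p := Nat.mod_lt _ hp
  have hry : y.2 % p < p := Nat.mod_lt _ hp
  -- step 1 : divisions agree
  have h0 := congrFun hxy ⟨0, hp⟩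
  rw [Jmap_eval_lt x ⟨0, hp⟩ (by show (0:ℕ) < p - x.2 % p; omega),
      Jmap_eval_lt y ⟨0, hp⟩ (by show (0:ℕ) < p - y.2 % p; omega)] at h0
  obtain ⟨hdiv, -⟩ := div_aux (show 0 < m + p by omega)
    (x.1.2.2 _).1 (x.1.2.2 _).2 (y.1.2.2 _).1 (y.1.2.2 _).2 h0
  clear h0
  -- step 2 : mods agree
  have hmod : x.2 % p = y.2 % p := by
    rcases lt_trichotomy (x.2 % p) (y.2 % p) with h | h | h
    · exact absurd (mod_lt_aux hp x y hxy hdiv h) not_false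
    · exact h
    · exact absurd (mod_lt_aux hp y x hxy.symm hdiv.symm h) not_false
  have ha : x.2 = y.2 := by
    have hx := Nat.div_add_mod x.2 p
    have hy := Nat.div_add_mod y.2 p
    have e3 : p * (x.2 / p) = p * (y.2 / p) := by rw [hdiv]
    omega
  -- step 3 : rows agree
  have e2 : x.2 / p * (m + p) = y.2 / p * (m + p) := by rw [hdiv]
  have hfun : x.1.1 = y.1.1 := by
    funext k
    have hk := k.isLt
    by_cases hkr : x.2 % p ≤ (k : ℕ)
    · have hik : (k : ℕ) - x.2 % p < p := by omega
      have h := congrFun hxy ⟨(k : ℕ) - x.2 % p, hik⟩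
      rw [Jmap_eval_lt x ⟨(k : ℕ) - x.2 % p, hik⟩
            (by show (k:ℕ) - x.2 % p < p - x.2 % p; omega),
          Jmap_eval_lt y ⟨(k : ℕ) - x.2 % p, hik⟩
            (by show (k:ℕ) - x.2 % p < p - y.2 % p; omega)] at h
      dsimp only at h
      have h' : x.1.1 ⟨x.2 % p + ((k:ℕ) - x.2 % p), by omega⟩
          = y.1.1 ⟨y.2 % p + ((k:ℕ) - x.2 % p), by omega⟩ := by omega
      calc x.1.1 k = x.1.1 ⟨x.2 % p + ((k:ℕ) - x.2 % p), by omega⟩ :=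
            (row_congr' x.1 _ k (by omega)).symm
        _ = y.1.1 ⟨y.2 % p + ((k:ℕ) - x.2 % p), by omega⟩ := h'
        _ = y.1.1 k := row_congr' y.1 _ k (by omega)
    · have hik : p - x.2 % p + (k : ℕ) < p := by omega
      have h := congrFun hxy ⟨p - x.2 % p + (k : ℕ), hik⟩
      rw [Jmap_eval_ge x ⟨p - x.2 % p + (k : ℕ), hik⟩
            (by show ¬ (p - x.2 % p + (k:ℕ) < p - x.2 % p); omega),
          Jmap_eval_ge y ⟨p - x.2 % p + (k : ℕ), hik⟩
            (by show ¬ (p - x.2 % p + (k:ℕ) < p - y.2 % p); omega)] at h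
      dsimp only at h
      have e4 : (x.2 / p + 1) * (m + p) = (y.2 / p + 1) * (m + p) := by rw [hdiv]
      have h' : x.1.1 ⟨p - x.2 % p + (k:ℕ) - (p - x.2 % p), by omega⟩
          = y.1.1 ⟨p - x.2 % p + (k:ℕ) - (p - y.2 % p), by omega⟩ := by omega
      calc x.1.1 k = x.1.1 ⟨p - x.2 % p + (k:ℕ) - (p - x.2 % p), by omega⟩ :=
            (row_congr' x.1 _ k (by omega)).symm
        _ = y.1.1 ⟨p - x.2 % p + (k:ℕ) - (p - y.2 % p), by omega⟩ := h'
        _ = y.1.1 k := row_congr' y.1 _ k (by omega)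
  exact Prod.ext (Subtype.ext hfun) ha

lemma fun_congr {p : ℕ} (J : Fin p → ℕ) (v : ℕ) (hv : v < p) (j : Fin p)
    (h : v = (j : ℕ)) : J ⟨v, hv⟩ = J j :=
  congrArg J (Fin.ext h)

def ext0 {p : ℕ} (J : Fin p → ℕ) : ℕ → ℕ := fun n => if h : n < p then J ⟨n, h⟩ else 0

lemma ext0_eq {p : ℕ} (J : Fin p → ℕ) (i : Fin p) : ext0 J (i : ℕ) = J i := by
  simp only [ext0]; rw [dif_pos i.isLt]

/-- `J` is a bijection from `C_{p,m}` onto the set of strictly increasing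
`p`-tuples `j_1 < ⋯ < j_p` of positive integers with `j_p - (m+p) < j_1`. -/
theorem Jmap_bijective (p m : ℕ) (hp : 0 < p) (hm : 0 < m) :
    Set.BijOn (Jmap (p := p) (m := m)) Set.univ
      {J : Fin p → ℕ | StrictMono J ∧ (∀ i, 1 ≤ J i) ∧
        J ⟨p - 1, by omega⟩ < J ⟨0, hp⟩ + (m + p)} := by
  refine ⟨fun x _ => Jmap_mapsTo hp hm x, fun x _ y _ hxy => Jmap_inj hp hm x y hxy, ?_⟩
  intro J hJ
  obtain ⟨hmono, hpos, hlast⟩ := hJ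
  have hq : 0 < m + p := by omega
  have hJ0pos : 1 ≤ J ⟨0, hp⟩ := hpos _
  -- find the level l
  obtain ⟨l, hl1, hl2⟩ : ∃ l, l * (m + p) + 1 ≤ J ⟨0, hp⟩ ∧ J ⟨0, hp⟩ ≤ (l + 1) * (m + p) := by
    refine ⟨(J ⟨0, hp⟩ - 1) / (m + p), ?_, ?_⟩
    · have h1 := Nat.div_mul_le_self (J ⟨0, hp⟩ - 1) (m + p)
      omega
    · have h1 := Nat.div_add_mod (J ⟨0, hp⟩ - 1) (m + p)
      have h2 : (J ⟨0, hp⟩ - 1) % (m + p) < m + p := Nat.mod_lt _ hq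
      have h3 : ((J ⟨0, hp⟩ - 1) / (m + p) + 1) * (m + p)
          = (m + p) * ((J ⟨0, hp⟩ - 1) / (m + p)) + (m + p) := by ring
      omega
  -- find the threshold t
  have hfind : ∃ n, p ≤ n ∨ (l + 1) * (m + p) < ext0 J n := ⟨p, Or.inl le_rfl⟩
  obtain ⟨t, ht_le, ht_pos, habove, hbelow⟩ :
      ∃ t, t ≤ p ∧ 0 < t ∧ (∀ i : Fin p, t ≤ (i : ℕ) → (l + 1) * (m + p) < J i) ∧
        (∀ i : Fin p, (i : ℕ) < t → J i ≤ (l + 1) * (m + p)) := by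
    refine ⟨Nat.find hfind, Nat.find_le (Or.inl le_rfl), ?_, ?_, ?_⟩
    · rcases Nat.eq_zero_or_pos (Nat.find hfind) with h0 | h0
      · exfalso
        have hspec := Nat.find_spec hfind
        rw [h0] at hspec
        rcases hspec with h | h
        · omega
        · have h' : (l + 1) * (m + p) < J ⟨0, hp⟩ := by
            rw [← ext0_eq J ⟨0, hp⟩]; exact h
          omega
      · exact h0
    · intro i hti
      have htp : Nat.find hfind < p := lt_of_le_of_lt hti i.isLt
      rcases Nat.find_spec hfind with h | h
      · omega
      · have h' : (l + 1) * (m + p) < J ⟨Nat.find hfind, htp⟩ := by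
          rw [← ext0_eq J ⟨Nat.find hfind, htp⟩]; exact h
        exact lt_of_lt_of_le h' (hmono.monotone (by rw [Fin.le_def]; exact hti))
    · intro i hit
      have hmin := Nat.find_min hfind hit
      push_neg at hmin
      obtain ⟨-, h2⟩ := hmin
      rw [ext0_eq J i] at h2
      exact h2
  -- global bounds
  have hup : ∀ i : Fin p, J i < J ⟨0, hp⟩ + (m + p) := by
    intro i
    have h1 : J i ≤ J ⟨p - 1, by omega⟩ :=
      hmono.monotone (by rw [Fin.le_def]; show (i : ℕ) ≤ p - 1; have := i.isLt; omega)
    exact lt_of_le_of_lt h1 hlast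
  have hlow : ∀ i : Fin p, l * (m + p) + 1 ≤ J i := by
    intro i
    have h1 : J ⟨0, hp⟩ ≤ J i :=
      hmono.monotone (by rw [Fin.le_def]; show (0 : ℕ) ≤ (i : ℕ); omega)
    omega
  -- arithmetic on a = p*l + (p-t)
  have hamod : (p * l + (p - t)) % p = p - t := by
    rw [Nat.mul_add_mod, Nat.mod_eq_of_lt (by omega)]
  have hadiv : (p * l + (p - t)) / p = l := by
    rw [Nat.mul_add_div hp, Nat.div_eq_of_lt (by omega)]
    omega
  -- the row α
  obtain ⟨α, hα⟩ : ∃ α : Fin p → ℕ, ∀ k : Fin p, α k =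
      if hk : (k : ℕ) < p - t then
        J ⟨t + (k : ℕ), by have := k.isLt; omega⟩ - (l + 1) * (m + p)
      else
        J ⟨(k : ℕ) - (p - t), by have := k.isLt; omega⟩ - l * (m + p) :=
    ⟨_, fun k => rfl⟩
  have hαb : ∀ k : Fin p, 1 ≤ α k ∧ α k ≤ m + p := by
    intro k
    have hkp := k.isLt
    have e1 : (l + 1) * (m + p) = l * (m + p) + (m + p) := by ring
    rw [hα k]
    by_cases hk : (k : ℕ) < p - t
    · rw [dif_pos hk]
      have h1 := habove ⟨t + (k : ℕ), by omega⟩ (by show t ≤ t + (k : ℕ); omega)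
      have h2 := hup ⟨t + (k : ℕ), by omega⟩
      omega
    · rw [dif_neg hk]
      have h1 := hbelow ⟨(k : ℕ) - (p - t), by omega⟩ (by show (k : ℕ) - (p - t) < t; omega)
      have h2 := hlow ⟨(k : ℕ) - (p - t), by omega⟩
      omega
  have hαmono : StrictMono α := by
    intro k1 k2 hk12
    have hv : (k1 : ℕ) < (k2 : ℕ) := hk12
    have h1p := k1.isLt
    have h2p := k2.isLt
    have e1 : (l + 1) * (m + p) = l * (m + p) + (m + p) := by ring
    rw [hα k1, hα k2]
    by_cases h1 : (k1 : ℕ) < p - t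
    · by_cases h2 : (k2 : ℕ) < p - t
      · rw [dif_pos h1, dif_pos h2]
        have hm1 := habove ⟨t + (k1 : ℕ), by omega⟩ (by show t ≤ t + (k1 : ℕ); omega)
        have hmJ : J ⟨t + (k1 : ℕ), by omega⟩ < J ⟨t + (k2 : ℕ), by omega⟩ :=
          hmono (by rw [Fin.lt_def]; show t + (k1 : ℕ) < t + (k2 : ℕ); omega)
        omega
      · rw [dif_pos h1, dif_neg h2]
        have ha1 := hup ⟨t + (k1 : ℕ), by omega⟩
        have ha2 : J ⟨0, hp⟩ ≤ J ⟨(k2 : ℕ) - (p - t), by omega⟩ :=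
          hmono.monotone (by rw [Fin.le_def]; show (0 : ℕ) ≤ _; omega)
        have ha3 := hlow ⟨(k2 : ℕ) - (p - t), by omega⟩
        have ha4 := habove ⟨t + (k1 : ℕ), by omega⟩ (by show t ≤ t + (k1 : ℕ); omega)
        omega
    · have h2 : ¬ (k2 : ℕ) < p - t := by omega
      rw [dif_neg h1, dif_neg h2]
      have hmJ : J ⟨(k1 : ℕ) - (p - t), by omega⟩ < J ⟨(k2 : ℕ) - (p - t), by omega⟩ :=
        hmono (by rw [Fin.lt_def]; show (k1 : ℕ) - (p - t) < (k2 : ℕ) - (p - t); omega)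
      have ha3 := hlow ⟨(k1 : ℕ) - (p - t), by omega⟩
      omega
  refine ⟨(⟨α, hαmono, hαb⟩, p * l + (p - t)), Set.mem_univ _, ?_⟩
  funext i
  have hip := i.isLt
  by_cases hi : (i : ℕ) < p - (p * l + (p - t)) % p
  · rw [Jmap_eval_lt (⟨α, hαmono, hαb⟩, p * l + (p - t)) i hi]
    dsimp only
    rw [hα]
    dsimp only
    rw [dif_neg (by omega : ¬ ((p * l + (p - t)) % p + (i : ℕ) < p - t))]
    rw [fun_congr J ((p * l + (p - t)) % p + (i : ℕ) - (p - t)) (by omega) i (by omega)]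
    have e5 : (p * l + (p - t)) / p * (m + p) = l * (m + p) := by rw [hadiv]
    have h1 := hlow i
    omega
  · rw [Jmap_eval_ge (⟨α, hαmono, hαb⟩, p * l + (p - t)) i hi]
    dsimp only
    rw [hα]
    dsimp only
    rw [dif_pos (by omega : ((i : ℕ) - (p - (p * l + (p - t)) % p) < p - t))]
    rw [fun_congr J (t + ((i : ℕ) - (p - (p * l + (p - t)) % p))) (by omega) i (by omega)]
    have e5 : ((p * l + (p - t)) / p + 1) * (m + p) = (l + 1) * (m + p) := by rw [hadiv]
    have h1 := habove i (by omega)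
    omega
end

section
/- The bijection J : C_{p,m} → {strictly increasing p-tuples (j_1 < ... < j_p) of positive integers with j_p - (m+p) < j_1} is an order isomorphism, where the target carries the componentwise partial order: α^{(a)} ≤ β^{(b)} in C_{p,m} if and only if J(α^{(a)})_i ≤ J(β^{(b)})_i for all i. -/
def qle {p m : ℕ} (x y : QElt p m) : Prop :=
  x.2 ≤ y.2 ∧ ∀ i j : Fin p, (j : ℕ) = (i : ℕ) + (y.2 - x.2) → x.1.1 i ≤ y.1.1 j

/-- Periodic extension of a `p`-tuple. -/
def hatf {p : ℕ} (hp : 0 < p) (m : ℕ) (α : Fin p → ℕ) (n : ℕ) : ℕ :=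
  n / p * (m + p) + α ⟨n % p, Nat.mod_lt n hp⟩

lemma hatf_spec {p : ℕ} (hp : 0 < p) (m : ℕ) (α : Fin p → ℕ) (l s : ℕ) (hs : s < p) :
    hatf hp m α (p * l + s) = l * (m + p) + α ⟨s, hs⟩ := by
  unfold hatf
  have h1 : (p * l + s) / p = l := by
    rw [Nat.mul_add_div hp, Nat.div_eq_of_lt hs, add_zero]
  have h2 : (p * l + s) % p = s := by
    rw [Nat.mul_add_mod, Nat.mod_eq_of_lt hs]
  congr 1
  · rw [h1]
  · exact congrArg α (Fin.ext h2)

lemma Jmap_eq {p m : ℕ} (hp : 0 < p) (x : QElt p m) (i : Fin p) :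
    Jmap x i = hatf hp m x.1.1 (x.2 + (i : ℕ)) := by
  have hd := Nat.div_add_mod x.2 p
  have hr : x.2 % p < p := Nat.mod_lt _ hp
  have hi := i.isLt
  unfold Jmap
  split_ifs with h
  · have e : (x.2 + (i : ℕ)) = p * (x.2 / p) + (x.2 % p + (i : ℕ)) := by omega
    rw [e, hatf_spec hp m _ _ _ (by omega)]
  · have e2 : p * (x.2 / p + 1) = p * (x.2 / p) + p := by ring
    have e : (x.2 + (i : ℕ)) = p * (x.2 / p + 1) + ((i : ℕ) - (p - x.2 % p)) := by omega
    rw [e, hatf_spec hp m _ _ _ (by omega)]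

lemma hatf_lb {p : ℕ} (hp : 0 < p) (m : ℕ) (α : Fin p → ℕ)
    (hα : ∀ i, 1 ≤ α i) (n : ℕ) : n / p * (m + p) + 1 ≤ hatf hp m α n := by
  unfold hatf
  have := hα ⟨n % p, Nat.mod_lt n hp⟩
  omega

/-- the bijection `J` is an order isomorphism: `α^{(a)} ≤ β^{(b)}` in
`C_{p,m}` iff `J(α^{(a)})_i ≤ J(β^{(b)})_i` componentwise. -/
theorem Jmap_orderIso (p m : ℕ) (hp : 0 < p) (hm : 0 < m) (x y : QElt p m) :
    qle x y ↔ ∀ i : Fin p, Jmap x i ≤ Jmap y i := by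
  obtain ⟨hα, hαbd⟩ := x.1.2
  obtain ⟨hβ, hβbd⟩ := y.1.2
  constructor
  · rintro ⟨hab, hcomp⟩ i
    rw [Jmap_eq hp, Jmap_eq hp]
    set d := y.2 - x.2 with hd
    have hq := Nat.div_add_mod (x.2 + (i : ℕ)) p
    set q := (x.2 + (i : ℕ)) / p with hqdef
    set s := (x.2 + (i : ℕ)) % p with hsdef
    have hslt : s < p := Nat.mod_lt _ hp
    have e1 : x.2 + (i : ℕ) = p * q + s := by omega
    have e2 : y.2 + (i : ℕ) = p * q + (s + d) := by omega
    rw [e1, e2, hatf_spec hp m _ _ _ hslt]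
    by_cases hsd : s + d < p
    · rw [hatf_spec hp m _ _ _ hsd]
      have hc := hcomp ⟨s, hslt⟩ ⟨s + d, hsd⟩ rfl
      omega
    · have hlb := hatf_lb hp m y.1.1 (fun j => (hβbd j).1) (p * q + (s + d))
      have hqq : q + 1 ≤ (p * q + (s + d)) / p := by
        rw [Nat.le_div_iff_mul_le hp]
        have : (q + 1) * p = p * q + p := by ring
        omega
      have hmul : (q + 1) * (m + p) ≤ (p * q + (s + d)) / p * (m + p) :=
        Nat.mul_le_mul_right _ hqq
      have hrng : (q + 1) * (m + p) = q * (m + p) + (m + p) := by ring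
      have hub := (hαbd ⟨s, hslt⟩).2
      omega
  · intro h
    have ha : x.2 ≤ y.2 := by
      by_contra hba
      push_neg at hba
      have hr : y.2 % p < p := Nat.mod_lt _ hp
      have hdb := Nat.div_add_mod y.2 p
      set i₀ : Fin p := ⟨p - 1 - y.2 % p, by omega⟩ with hi₀
      have H := h i₀
      rw [Jmap_eq hp, Jmap_eq hp] at H
      have hv : (i₀ : ℕ) = p - 1 - y.2 % p := rfl
      have e2 : y.2 + (i₀ : ℕ) = p * (y.2 / p) + (p - 1) := by omega
      rw [e2, hatf_spec hp m _ _ _ (by omega)] at H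
      have hlb := hatf_lb hp m x.1.1 (fun j => (hαbd j).1) (x.2 + (i₀ : ℕ))
      have hqq : y.2 / p + 1 ≤ (x.2 + (i₀ : ℕ)) / p := by
        rw [Nat.le_div_iff_mul_le hp]
        have : (y.2 / p + 1) * p = p * (y.2 / p) + p := by ring
        omega
      have hmul : (y.2 / p + 1) * (m + p) ≤ (x.2 + (i₀ : ℕ)) / p * (m + p) :=
        Nat.mul_le_mul_right _ hqq
      have hrng : (y.2 / p + 1) * (m + p) = y.2 / p * (m + p) + (m + p) := by ring
      have hub := (hβbd ⟨p - 1, by omega⟩).2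
      omega
    refine ⟨ha, ?_⟩
    intro i j hj
    set d := y.2 - x.2 with hd
    have hjd : (i : ℕ) + d < p := by have := j.isLt; omega
    have hr : x.2 % p < p := Nat.mod_lt _ hp
    have hdm := Nat.div_add_mod x.2 p
    have hex : ∃ q i₀, i₀ < p ∧ x.2 + i₀ = p * q + (i : ℕ) := by
      have h2 : p * (x.2 / p + 1) = p * (x.2 / p) + p := by ring
      by_cases hri : x.2 % p ≤ (i : ℕ)
      · exact ⟨x.2 / p, (i : ℕ) - x.2 % p, by omega, by omega⟩
      · exact ⟨x.2 / p + 1, (i : ℕ) + p - x.2 % p, by omega, by omega⟩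
    obtain ⟨q, i₀, hi₀, he⟩ := hex
    have H := h ⟨i₀, hi₀⟩
    rw [Jmap_eq hp, Jmap_eq hp] at H
    have hv : ((⟨i₀, hi₀⟩ : Fin p) : ℕ) = i₀ := rfl
    have e1 : x.2 + ((⟨i₀, hi₀⟩ : Fin p) : ℕ) = p * q + (i : ℕ) := by omega
    have e2 : y.2 + ((⟨i₀, hi₀⟩ : Fin p) : ℕ) = p * q + ((i : ℕ) + d) := by omega
    rw [e1, e2, hatf_spec hp m _ _ _ i.isLt, hatf_spec hp m _ _ _ hjd] at H
    have ei : x.1.1 ⟨(i : ℕ), i.isLt⟩ = x.1.1 i := congrArg _ (Fin.ext rfl)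
    have ej : y.1.1 ⟨(i : ℕ) + d, hjd⟩ = y.1.1 j := congrArg _ (Fin.ext hj.symm)
    rw [ei, ej] at H
    omega
end

section
/- The bijection J preserves the rank function: for every α^{(a)} in C_{p,m}, writing a = pl + r with 0 ≤ r < p, one has a(m+p) + Σ_{j=1}^{p}(α_j - j) = Σ_{i=1}^{p}(J(α^{(a)})_i - i). -/
/-- `J` preserves the rank function:
`a(m+p) + Σ_j (α_j − j) = Σ_i (J(α^{(a)})_i − i)` (indices 1-based, so the `i`-th
term subtracts `i+1` for the 0-based index `i`). -/
theorem Jmap_rank (p m : ℕ) (hp : 0 < p) (hm : 0 < m) (x : QElt p m) :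
    (x.2 : ℤ) * (m + p) + ∑ i : Fin p, ((x.1.1 i : ℤ) - ((i : ℕ) + 1)) =
      ∑ i : Fin p, ((Jmap x i : ℤ) - ((i : ℕ) + 1)) := by
  have hpne : NeZero p := ⟨hp.ne'⟩
  have hr : x.2 % p < p := Nat.mod_lt _ hp
  have key : ∑ i : Fin p, (Jmap x i : ℤ) = (x.2 : ℤ) * (m + p) + ∑ i : Fin p, (x.1.1 i : ℤ) := by
    have hJ : ∀ i : Fin p, (Jmap x i : ℤ) =
        ((x.2 / p : ℕ) : ℤ) * (m + p) + (if (i : ℕ) < p - x.2 % p then 0 else ((m : ℤ) + p))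
          + (x.1.1 ((⟨x.2 % p, hr⟩ : Fin p) + i) : ℤ) := by
      intro i
      unfold Jmap
      split_ifs with h
      · have hv : ((⟨x.2 % p, hr⟩ : Fin p) + i).val = x.2 % p + (i : ℕ) := by
          show (x.2 % p + (i : ℕ)) % p = _
          exact Nat.mod_eq_of_lt (by omega)
        have hi : ((⟨x.2 % p, hr⟩ : Fin p) + i) = ⟨x.2 % p + (i : ℕ), by omega⟩ := Fin.ext hv
        rw [hi]; push_cast; ring
      · have h1 := i.isLt
        have hv : ((⟨x.2 % p, hr⟩ : Fin p) + i).val = (i : ℕ) - (p - x.2 % p) := by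
          show (x.2 % p + (i : ℕ)) % p = _
          rw [Nat.mod_eq_sub_mod (by omega), Nat.mod_eq_of_lt (by omega)]
          omega
        have hi : ((⟨x.2 % p, hr⟩ : Fin p) + i) = ⟨(i : ℕ) - (p - x.2 % p), by omega⟩ :=
          Fin.ext hv
        rw [hi]; push_cast; ring
    rw [Finset.sum_congr rfl (fun i _ => hJ i)]
    rw [Finset.sum_add_distrib, Finset.sum_add_distrib]
    have h3 : ∑ i : Fin p, (x.1.1 ((⟨x.2 % p, hr⟩ : Fin p) + i) : ℤ) = ∑ i : Fin p, (x.1.1 i : ℤ) :=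
      Fintype.sum_equiv (Equiv.addLeft (⟨x.2 % p, hr⟩ : Fin p)) _ _ (fun i => rfl)
    have h1 : ∑ _i : Fin p, ((x.2 / p : ℕ) : ℤ) * (m + p) = (p : ℤ) * ((x.2 / p : ℕ) * (m + p)) := by
      rw [Finset.sum_const]; simp [mul_comm]
    have h2 : ∑ i : Fin p, (if (i : ℕ) < p - x.2 % p then (0 : ℤ) else ((m : ℤ) + p))
        = ((x.2 % p : ℕ) : ℤ) * (m + p) := by
      rw [Fin.sum_univ_eq_sum_range (fun i => if i < p - x.2 % p then (0 : ℤ) else ((m : ℤ) + p))]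
      rw [Finset.range_eq_Ico, ← Finset.sum_Ico_consecutive _ (Nat.zero_le (p - x.2 % p)) (by omega)]
      rw [Finset.sum_congr rfl (fun i hi => if_pos (Finset.mem_Ico.mp hi).2),
        Finset.sum_congr rfl (fun i hi => if_neg (by have := (Finset.mem_Ico.mp hi).1; omega))]
      rw [Finset.sum_const, Finset.sum_const, Nat.card_Ico, Nat.card_Ico,
        show p - (p - x.2 % p) = x.2 % p by omega]
      rw [smul_zero, zero_add, nsmul_eq_mul]
    rw [h1, h2, h3]
    have := Nat.div_add_mod x.2 p
    have hcast : (x.2 : ℤ) = (p : ℤ) * ((x.2 / p : ℕ) : ℤ) + ((x.2 % p : ℕ) : ℤ) := by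
      exact_mod_cast this.symm
    rw [hcast]; ring
  rw [Finset.sum_sub_distrib, Finset.sum_sub_distrib, key]
  ring
end

section
/- The distributive lattice C^q_{p,m} is graded by the rank function |α^{(a)}| = a(m+p) + Σ_{j=1}^{p}(α_j − j): whenever β^{(b)} is covered by α^{(a)} in C^q_{p,m}, one has |α^{(a)}| = |β^{(b)}| + 1. -/
/-- The rank function `|α^{(a)}| = a(m+p) + Σ_{j=1}^p (α_j − j)`. -/
def qrank {p : ℕ} (m : ℕ) (x : QElt p m) : ℤ :=
  (x.2 : ℤ) * (m + p) + ∑ i : Fin p, ((x.1.1 i : ℤ) - ((i : ℕ) + 1))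

lemma fin_step_aux {p : ℕ} {α : Fin p → ℕ} (h : StrictMono α) :
    ∀ n (i j : Fin p), (j : ℕ) = (i : ℕ) + n → α i + n ≤ α j := by
  intro n
  induction n with
  | zero =>
    intro i j hj
    have : i = j := Fin.ext (by omega)
    subst this; omega
  | succ n ih =>
    intro i j hj
    have hlt : (i : ℕ) + n < p := by have := j.isLt; omega
    have h1 := ih i ⟨(i : ℕ) + n, hlt⟩ rfl
    have h2 : α ⟨(i : ℕ) + n, hlt⟩ < α j := h (by simp [Fin.lt_def]; omega)
    omega

lemma tuple_upper {p m : ℕ} {α : Fin p → ℕ} (h1 : StrictMono α)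
    (h2 : ∀ i, 1 ≤ α i ∧ α i ≤ m + p) (i : Fin p) : α i ≤ m + 1 + i := by
  have hl : p - 1 < p := by have := i.isLt; omega
  have ha := fin_step_aux h1 (p - 1 - i) i ⟨p - 1, hl⟩ (by simp; have := i.isLt; omega)
  have hb := (h2 ⟨p - 1, hl⟩).2
  have := i.isLt; omega

lemma tuple_lower {p m : ℕ} (hp : 0 < p) {α : Fin p → ℕ} (h1 : StrictMono α)
    (h2 : ∀ i, 1 ≤ α i ∧ α i ≤ m + p) (i : Fin p) : (i : ℕ) + 1 ≤ α i := by
  have ha := fin_step_aux h1 (i : ℕ) ⟨0, hp⟩ i (by simp)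
  have hb := (h2 ⟨0, hp⟩).1
  omega

def bump {p : ℕ} (α : Fin p → ℕ) (u : Fin p) : Fin p → ℕ :=
  fun j => if j = u then α u + 1 else α j

lemma bump_smono {p : ℕ} {α : Fin p → ℕ} {u : Fin p} (hα : StrictMono α)
    (h : ∀ k, u < k → α u + 1 < α k) : StrictMono (bump α u) := by
  intro j k hjk
  unfold bump
  split_ifs with h1 h2 h2
  · exfalso; rw [h1, h2] at hjk; exact lt_irrefl _ hjk
  · subst h1; exact h k hjk
  · subst h2; have := hα hjk; omega
  · exact hα hjk

def midT (p m : ℕ) (d : ℕ) (β : Fin p → ℕ) : Fin p → ℕ :=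
  fun j => min (if h : (j : ℕ) + d - 1 < p then β ⟨(j : ℕ) + d - 1, h⟩ else m + p + 1 + j)
    (m + 1 + (j : ℕ))

def muT (p : ℕ) (α : Fin p → ℕ) : Fin p → ℕ :=
  fun j => if h : 0 < (j : ℕ) then
    α ⟨(j : ℕ) - 1, Nat.lt_of_le_of_lt (Nat.sub_le _ _) j.isLt⟩ else 1

/-- `C^q_{p,m}` is graded by the rank function: whenever `β^{(b)}` is
covered by `α^{(a)}` in `C^q_{p,m}`, the ranks differ by exactly `1`. -/
theorem truncation_graded (p m q : ℕ) (hp : 0 < p) (hm : 0 < m)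
    (x y : QElt p m) (hx : x.2 ≤ q) (hy : y.2 ≤ q)
    (hlt : qle x y ∧ x ≠ y)
    (hcov : ∀ z : QElt p m, z.2 ≤ q → qle x z → qle z y → z = x ∨ z = y) :
    qrank m y = qrank m x + 1 := by
  obtain ⟨hxy, hne⟩ := hlt
  obtain ⟨⟨α, hαm, hαb⟩, a⟩ := x
  obtain ⟨⟨β, hβm, hβb⟩, b⟩ := y
  obtain ⟨hab, hle⟩ := hxy
  simp only at hx hy hab hle hcov hne
  -- Step 1 : b ≤ a + 1
  have hd : b ≤ a + 1 := by
    by_contra hcon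
    push_neg at hcon
    have hd2 : 2 ≤ b - a := by omega
    have hγm : StrictMono (midT p m (b - a) β) := by
      intro j k hjk
      have hjk' : (j : ℕ) < k := hjk
      unfold midT
      have hB : (if h : (j : ℕ) + (b - a) - 1 < p then β ⟨(j : ℕ) + (b - a) - 1, h⟩
          else m + p + 1 + j) < (if h : (k : ℕ) + (b - a) - 1 < p then β ⟨(k : ℕ) + (b - a) - 1, h⟩
          else m + p + 1 + k) := by
        by_cases h1 : (j : ℕ) + (b - a) - 1 < p
        · by_cases h2 : (k : ℕ) + (b - a) - 1 < p
          · simp only [dif_pos h1, dif_pos h2]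
            exact hβm (by simp [Fin.lt_def]; omega)
          · simp only [dif_pos h1, dif_neg h2]
            have := (hβb ⟨(j : ℕ) + (b - a) - 1, h1⟩).2
            omega
        · have h2 : ¬ ((k : ℕ) + (b - a) - 1 < p) := by omega
          simp only [dif_neg h1, dif_neg h2]
          omega
      omega
    have hγb : ∀ j, 1 ≤ midT p m (b - a) β j ∧ midT p m (b - a) β j ≤ m + p := by
      intro j
      have hj := j.isLt
      unfold midT
      constructor
      · apply le_min _ (by omega)
        split_ifs with h1
        · exact (hβb _).1
        · omega
      · exact le_trans (min_le_right _ _) (by omega)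
    set z : QElt p m := (⟨midT p m (b - a) β, hγm, hγb⟩, a + 1) with hz
    have hxz : qle (⟨⟨α, hαm, hαb⟩, a⟩) z := by
      constructor
      · show a ≤ a + 1; omega
      · intro i j hij
        have hij' : (j : ℕ) = (i : ℕ) + 1 := by simpa [hz] using hij
        show α i ≤ midT p m (b - a) β j
        unfold midT
        apply le_min
        · split_ifs with h1
          · exact hle i ⟨(j : ℕ) + (b - a) - 1, h1⟩ (by simp; omega)
          · have := (hαb i).2; omega
        · have := tuple_upper hαm hαb i; omega
    have hzy : qle z (⟨⟨β, hβm, hβb⟩, b⟩) := by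
      constructor
      · show a + 1 ≤ b; omega
      · intro i j hij
        have hij' : (j : ℕ) = (i : ℕ) + (b - (a + 1)) := hij
        have hc : (i : ℕ) + (b - a) - 1 < p := by have := j.isLt; omega
        show midT p m (b - a) β i ≤ β j
        unfold midT
        refine le_trans (min_le_left _ _) ?_
        rw [dif_pos hc]
        have : (⟨(i : ℕ) + (b - a) - 1, hc⟩ : Fin p) = j := Fin.ext (by simp; omega)
        rw [this]
    rcases hcov z (by show a + 1 ≤ q; omega) hxz hzy with h | h
    · have := congrArg Prod.snd h; simp [hz] at this
    · have := congrArg Prod.snd h; simp [hz] at this; omega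
  by_cases hba : b = a
  · -- same level case
    subst hba
    have hαβ : ∀ i, α i ≤ β i := fun i => hle i i (by omega)
    have hneq : α ≠ β := by
      intro hc
      exact hne (congrArg (fun r => ((r : QRow p m), b)) (Subtype.ext hc))
    have hexists : ∃ i, α i < β i := by
      by_contra hc; push_neg at hc
      exact hneq (funext fun i => le_antisymm (hαβ i) (hc i))
    set S : Finset (Fin p) := Finset.univ.filter (fun i => α i < β i) with hS
    have hSne : S.Nonempty := by
      obtain ⟨w, hw⟩ := hexists
      exact ⟨w, by simp [hS, hw]⟩
    set u := S.max' hSne with hu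
    have huS : α u < β u := by
      have := S.max'_mem hSne; simp [hS] at this; exact this
    have humax : ∀ k, u < k → α k = β k := by
      intro k hk
      by_contra hck
      have h1 : α k < β k := lt_of_le_of_ne (hαβ k) hck
      have h2 : k ∈ S := by simp [hS]; exact h1
      have h3 := S.le_max' k h2
      exact absurd (lt_of_lt_of_le hk h3) (lt_irrefl _)
    have hnext : ∀ k, u < k → α u + 1 < α k := by
      intro k hk
      have h1 := humax k hk
      have h2 : β u < β k := hβm hk
      omega
    have hγm := bump_smono hαm hnext
    have hγb : ∀ j, 1 ≤ bump α u j ∧ bump α u j ≤ m + p := by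
      intro j; unfold bump; split_ifs with h1
      · have h2 := (hβb u).2
        have h3 := (hαb u).1
        omega
      · exact hαb j
    set z : QElt p m := (⟨bump α u, hγm, hγb⟩, b) with hz
    have hxz : qle (⟨⟨α, hαm, hαb⟩, b⟩) z := by
      constructor
      · exact le_refl b
      · intro i j hij
        have hij' : (j : ℕ) = (i : ℕ) + (b - b) := hij
        have : i = j := Fin.ext (by omega)
        subst this
        show α i ≤ bump α u i
        unfold bump; split_ifs with h1
        · subst h1; omega
        · exact le_refl _
    have hzy : qle z (⟨⟨β, hβm, hβb⟩, b⟩) := by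
      constructor
      · exact le_refl b
      · intro i j hij
        have hij' : (j : ℕ) = (i : ℕ) + (b - b) := hij
        have : i = j := Fin.ext (by omega)
        subst this
        show bump α u i ≤ β i
        unfold bump; split_ifs with h1
        · subst h1; omega
        · exact hαβ i
    rcases hcov z hx hxz hzy with h | h
    · have hfun : bump α u = α := congrArg (fun w => w.1.1) h
      have := congrFun hfun u
      unfold bump at this; simp at this
    · have hfun : bump α u = β := congrArg (fun w => w.1.1) h
      have hβi : ∀ i, (β i : ℤ) = (α i : ℤ) + (if i = u then 1 else 0) := by
        intro i; rw [← hfun]; unfold bump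
        by_cases h1 : i = u <;> simp [h1]
      unfold qrank; simp only
      have hsum : ∑ i : Fin p, ((β i : ℤ) - ((i : ℕ) + 1)) =
          ∑ i : Fin p, (((α i : ℤ) - ((i : ℕ) + 1)) + (if i = u then (1 : ℤ) else 0)) :=
        Finset.sum_congr rfl (fun i _ => by rw [hβi i]; ring)
      rw [hsum, Finset.sum_add_distrib, Finset.sum_ite_eq']
      simp
      try ring
  · -- level increases by one
    have hb1 : b = a + 1 := by omega
    subst hb1
    have hstep : ∀ i j : Fin p, (j : ℕ) = (i : ℕ) + 1 → α i ≤ β j :=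
      fun i j h => hle i j (by omega)
    have hβlow := tuple_lower hp hβm hβb
    have hpl : p - 1 < p := by omega
    -- Claim A : the last entry of α is maximal
    have hlast : α ⟨p - 1, hpl⟩ = m + p := by
      by_contra hcA
      have hcA' : α ⟨p - 1, hpl⟩ < m + p := lt_of_le_of_ne (hαb _).2 hcA
      have hnext : ∀ k, (⟨p - 1, hpl⟩ : Fin p) < k → α ⟨p - 1, hpl⟩ + 1 < α k := by
        intro k hk
        exfalso
        have h1 := k.isLt
        have h2 : (p - 1 : ℕ) < k := hk
        omega
      have hγm := bump_smono hαm hnext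
      have hγb : ∀ j, 1 ≤ bump α ⟨p - 1, hpl⟩ j ∧ bump α ⟨p - 1, hpl⟩ j ≤ m + p := by
        intro j; unfold bump; split_ifs with h1
        · have := (hαb ⟨p - 1, hpl⟩).1; omega
        · exact hαb j
      set z : QElt p m := (⟨bump α ⟨p - 1, hpl⟩, hγm, hγb⟩, a) with hz
      have hxz : qle (⟨⟨α, hαm, hαb⟩, a⟩) z := by
        constructor
        · exact le_refl a
        · intro i j hij
          have hij' : (j : ℕ) = (i : ℕ) + (a - a) := hij
          have : i = j := Fin.ext (by omega)
          subst this
          show α i ≤ bump α ⟨p - 1, hpl⟩ i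
          unfold bump; split_ifs with h1
          · subst h1; omega
          · exact le_refl _
      have hzy : qle z (⟨⟨β, hβm, hβb⟩, a + 1⟩) := by
        constructor
        · show a ≤ a + 1; omega
        · intro i j hij
          have hij' : (j : ℕ) = (i : ℕ) + 1 := by simpa [hz] using hij
          show bump α ⟨p - 1, hpl⟩ i ≤ β j
          unfold bump
          have hine : i ≠ ⟨p - 1, hpl⟩ := by
            intro hc
            have := j.isLt
            rw [hc] at hij'
            simp at hij'
            omega
          rw [if_neg hine]
          exact hstep i j hij'
      rcases hcov z hx hxz hzy with h | h
      · have hfun : bump α ⟨p - 1, hpl⟩ = α := congrArg (fun w => w.1.1) h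
        have := congrFun hfun ⟨p - 1, hpl⟩
        unfold bump at this; simp at this
      · have := congrArg Prod.snd h; simp [hz] at this
    -- Claim B : consecutive steps
    have hB : ∀ (i : Fin p) (h1 : (i : ℕ) + 1 < p), α i ≤ (i : ℕ) + 1 →
        α ⟨(i : ℕ) + 1, h1⟩ = α i + 1 := by
      intro i h1 hsm
      by_contra hcB
      have hge : α i + 2 ≤ α ⟨(i : ℕ) + 1, h1⟩ := by
        have := hαm (show i < ⟨(i : ℕ) + 1, h1⟩ by simp [Fin.lt_def])
        omega
      have hnext : ∀ k, i < k → α i + 1 < α k := by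
        intro k hk
        have h2 : α ⟨(i : ℕ) + 1, h1⟩ ≤ α k := by
          apply hαm.monotone
          simp [Fin.le_def]
          exact hk
        omega
      have hγm := bump_smono hαm hnext
      have hγb : ∀ j, 1 ≤ bump α i j ∧ bump α i j ≤ m + p := by
        intro j; unfold bump; split_ifs with hj1
        · have := (hαb i).1; omega
        · exact hαb j
      set z : QElt p m := (⟨bump α i, hγm, hγb⟩, a) with hz
      have hxz : qle (⟨⟨α, hαm, hαb⟩, a⟩) z := by
        constructor
        · exact le_refl a
        · intro i' j hij
          have hij' : (j : ℕ) = (i' : ℕ) + (a - a) := hij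
          have : i' = j := Fin.ext (by omega)
          subst this
          show α i' ≤ bump α i i'
          unfold bump; split_ifs with hj1
          · subst hj1; omega
          · exact le_refl _
      have hzy : qle z (⟨⟨β, hβm, hβb⟩, a + 1⟩) := by
        constructor
        · show a ≤ a + 1; omega
        · intro i' j hij
          have hij' : (j : ℕ) = (i' : ℕ) + 1 := by simpa [hz] using hij
          show bump α i i' ≤ β j
          unfold bump; split_ifs with hj1
          · subst hj1
            have := hβlow j
            omega
          · exact hstep i' j hij'
      rcases hcov z hx hxz hzy with h | h
      · have hfun : bump α i = α := congrArg (fun w => w.1.1) h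
        have := congrFun hfun i
        unfold bump at this; simp at this
      · have := congrArg Prod.snd h; simp [hz] at this
    -- the first entry is at least 2
    have hα0 : 2 ≤ α ⟨0, hp⟩ := by
      by_contra hc
      push_neg at hc
      have ha1 : α ⟨0, hp⟩ = 1 := by have := (hαb ⟨0, hp⟩).1; omega
      have hall : ∀ n (h : n < p), α ⟨n, h⟩ = n + 1 := by
        intro n
        induction n with
        | zero => intro h; exact ha1
        | succ k ih =>
          intro h
          have hk : k < p := by omega
          have hkk := ih hk
          have hb2 := hB ⟨k, hk⟩ (by simpa using h) (by rw [hkk])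
          simpa [hkk] using hb2
      have := hall (p - 1) hpl
      rw [hlast] at this
      omega
    have hαlow2 : ∀ i : Fin p, (i : ℕ) + 2 ≤ α i := by
      intro i
      have := fin_step_aux hαm (i : ℕ) ⟨0, hp⟩ i (by simp)
      omega
    -- the mu tuple
    have hμm : StrictMono (muT p α) := by
      intro j k hjk
      have hjk' : (j : ℕ) < k := hjk
      unfold muT
      by_cases h1 : 0 < (j : ℕ)
      · have h2 : 0 < (k : ℕ) := by omega
        simp only [dif_pos h1, dif_pos h2]
        exact hαm (by simp [Fin.lt_def]; omega)
      · have h2 : 0 < (k : ℕ) := by omega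
        simp only [dif_neg h1, dif_pos h2]
        have := hαlow2 ⟨(k : ℕ) - 1, Nat.lt_of_le_of_lt (Nat.sub_le _ _) k.isLt⟩
        omega
    have hμb : ∀ j, 1 ≤ muT p α j ∧ muT p α j ≤ m + p := by
      intro j
      unfold muT
      split_ifs with h1
      · exact hαb _
      · constructor
        · omega
        · omega
    set z : QElt p m := (⟨muT p α, hμm, hμb⟩, a + 1) with hz
    have hxz : qle (⟨⟨α, hαm, hαb⟩, a⟩) z := by
      constructor
      · show a ≤ a + 1; omega
      · intro i j hij
        have hij' : (j : ℕ) = (i : ℕ) + 1 := by simpa [hz] using hij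
        show α i ≤ muT p α j
        unfold muT
        have h1 : 0 < (j : ℕ) := by omega
        rw [dif_pos h1]
        have : (⟨(j : ℕ) - 1, Nat.lt_of_le_of_lt (Nat.sub_le _ _) j.isLt⟩ : Fin p) = i :=
          Fin.ext (by simp; omega)
        rw [this]
    have hzy : qle z (⟨⟨β, hβm, hβb⟩, a + 1⟩) := by
      constructor
      · exact le_refl _
      · intro i j hij
        have hij' : (j : ℕ) = (i : ℕ) + ((a + 1) - (a + 1)) := hij
        have : i = j := Fin.ext (by omega)
        subst this
        show muT p α i ≤ β i
        unfold muT
        split_ifs with h1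
        · exact hstep _ i (by simp; omega)
        · have := (hβb i).1; omega
    rcases hcov z hy hxz hzy with h | h
    · have := congrArg Prod.snd h; simp [hz] at this
    · have hfun : muT p α = β := congrArg (fun w => w.1.1) h
      -- final computation
      obtain ⟨n, rfl⟩ : ∃ n, p = n + 1 := ⟨p - 1, by omega⟩
      have hlast' : α (Fin.last n) = m + (n + 1) := by
        have he : (Fin.last n) = ⟨n + 1 - 1, hpl⟩ := Fin.ext (by simp)
        rw [he, hlast]
      have hβ0 : (β 0 : ℕ) = 1 := by
        rw [← hfun]; unfold muT; simp
      have hβs : ∀ i : Fin n, β i.succ = α i.castSucc := by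
        intro i
        rw [← hfun]; unfold muT
        have h1 : 0 < (i.succ : ℕ) := by simp
        rw [dif_pos h1]
        congr 1
      have hsumβ : ∑ i : Fin (n + 1), (β i : ℤ) =
          (∑ i : Fin (n + 1), (α i : ℤ)) + 1 - (m + (n + 1)) := by
        rw [Fin.sum_univ_succ (f := fun i => (β i : ℤ)),
          Fin.sum_univ_castSucc (f := fun i => (α i : ℤ))]
        have hs : ∑ i : Fin n, (β i.succ : ℤ) = ∑ i : Fin n, (α i.castSucc : ℤ) :=
          Finset.sum_congr rfl (fun i _ => by rw [hβs i])
        rw [hs, hβ0, hlast']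
        push_cast
        ring
      unfold qrank
      simp only
      rw [Finset.sum_sub_distrib, Finset.sum_sub_distrib]
      push_cast
      push_cast at hsumβ
      linarith [hsumβ]
end

section
/- With the term order ≺ on k[X] given by degree reverse lexicographic order refining the variable order x_{i,j}^{(l)} < x_{i',j'}^{(l')} iff (l,i,j) < (l',i',j') lexicographically, the initial monomial of φ(α^{(a)}) — the coefficient of t^a in the α-th maximal minor of M(t) — equals x_{r+1,α_p}^{(l)} x_{r+2,α_{p-1}}^{(l)} ⋯ x_{p,α_{r+1}}^{(l)} · x_{1,α_r}^{(l+1)} x_{2,α_{r-1}}^{(l+1)} ⋯ x_{r,α_1}^{(l+1)}, where a = pl + r with 0 ≤ r < p. -/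
open MvPolynomial

noncomputable def coeffMinor (k : Type) [Field k] (n : ℕ) {p : ℕ}
    (α : Fin p → ℕ) (a : ℕ) : MvPolynomial (ℕ × ℕ × ℕ) k :=
  Polynomial.coeff
    (Matrix.det (Matrix.of fun i j : Fin p =>
      ∑ l ∈ Finset.range (n + 1),
        Polynomial.C (X ((i : ℕ), α j, l) : MvPolynomial (ℕ × ℕ × ℕ) k) *
          Polynomial.X ^ l)) a

/-- Rank of the variable `x_{i,j}^{(l)}` (encoded `(i,j,l)`, all 0-based) in the
variable ordering: lexicographic in `(l, i, j)`. -/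
def varRank (p m : ℕ) (v : ℕ × ℕ × ℕ) : ℕ :=
  v.2.2 * (p * (m + p)) + v.1 * (m + p) + v.2.1

/-- `d` is smaller than `e` in the degree reverse lexicographic order: either the total
degree of `d` is smaller, or the degrees agree and at the smallest variable (in the
variable order) where `d` and `e` differ, `d` has the larger exponent. -/
def drlLower (p m : ℕ) (d e : (ℕ × ℕ × ℕ) →₀ ℕ) : Prop :=
  (d.sum fun _ x => x) < (e.sum fun _ x => x) ∨
    ((d.sum fun _ x => x) = (e.sum fun _ x => x) ∧
      ∃ v, e v < d v ∧ ∀ w, varRank p m w < varRank p m v → d w = e w)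

/-- The exponent vector of the claimed initial monomial
`x_{r+1,α_p}^{(l)} ⋯ x_{p,α_{r+1}}^{(l)} · x_{1,α_r}^{(l+1)} ⋯ x_{r,α_1}^{(l+1)}`
where `a = pl + r`, `0 ≤ r < p` (all indices 0-based in the encoding). -/
noncomputable def leadExp {p : ℕ} (α : Fin p → ℕ) (a : ℕ) : (ℕ × ℕ × ℕ) →₀ ℕ :=
  ∑ t : Fin p,
    if (t : ℕ) < p - a % p then
      Finsupp.single ((a % p + t : ℕ), α ⟨p - 1 - t, by have := t.isLt; omega⟩, a / p) 1
    else
      Finsupp.single (((t : ℕ) - (p - a % p)),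
        α ⟨a % p - 1 - ((t : ℕ) - (p - a % p)), by have := t.isLt; have := Nat.mod_lt a t.pos; omega⟩, a / p + 1) 1

namespace InitMin

/-! ### rank lemmas -/

lemma rank_lt_of_lex {p m : ℕ} {i j c i' j' c' : ℕ} (hi : i < p) (hj : j < m + p)
    (h : c < c' ∨ (c = c' ∧ (i < i' ∨ (i = i' ∧ j < j')))) :
    varRank p m (i, j, c) < varRank p m (i', j', c') := by
  unfold varRank; simp only
  rcases h with h | ⟨rfl, h | ⟨rfl, h⟩⟩
  · nlinarith [Nat.mul_le_mul_right (m + p) (Nat.succ_le_of_lt hi),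
      Nat.mul_le_mul_right (p * (m + p)) (Nat.succ_le_of_lt h)]
  · nlinarith [Nat.mul_le_mul_right (m + p) (Nat.succ_le_of_lt h)]
  · omega

lemma rank_lt_iff {p m : ℕ} {i j c i' j' c' : ℕ} (hi : i < p) (hi' : i' < p)
    (hj : j < m + p) (hj' : j' < m + p) :
    varRank p m (i, j, c) < varRank p m (i', j', c') ↔
      (c < c' ∨ (c = c' ∧ (i < i' ∨ (i = i' ∧ j < j')))) := by
  constructor
  · intro h
    by_contra hc
    have h2 : (c' < c ∨ (c' = c ∧ (i' < i ∨ (i' = i ∧ j' < j)))) ∨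
        (c' = c ∧ i' = i ∧ j' = j) := by omega
    rcases h2 with h2 | ⟨rfl, rfl, rfl⟩
    · exact absurd (rank_lt_of_lex hi' hj' h2) (by omega)
    · omega
  · exact rank_lt_of_lex hi hj

/-! ### Dexp -/

noncomputable def Dexp {p : ℕ} (α : Fin p → ℕ) (τ : Fin p → Fin p) (g : Fin p → ℕ) :
    (ℕ × ℕ × ℕ) →₀ ℕ :=
  ∑ i : Fin p, Finsupp.single ((i : ℕ), α (τ i), g i) 1

lemma Dexp_apply {p : ℕ} (α : Fin p → ℕ) (τ : Fin p → Fin p) (g : Fin p → ℕ)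
    (i : Fin p) (j c : ℕ) :
    Dexp α τ g ((i : ℕ), j, c) = if j = α (τ i) ∧ c = g i then 1 else 0 := by
  classical
  unfold Dexp
  rw [Finsupp.finset_sum_apply]
  rw [Finset.sum_eq_single i]
  · rw [Finsupp.single_apply]
    by_cases h : j = α (τ i) ∧ c = g i
    · obtain ⟨rfl, rfl⟩ := h; simp
    · rw [if_neg, if_neg h]
      intro hh
      apply h
      simp only [Prod.mk.injEq] at hh
      exact ⟨hh.2.1.symm, hh.2.2.symm⟩
  · intro b _ hb
    rw [Finsupp.single_apply, if_neg]
    intro hh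
    exact hb (Fin.ext (congrArg Prod.fst hh))
  · simp

lemma Dexp_ne_zero {p : ℕ} {α : Fin p → ℕ} {τ : Fin p → Fin p} {g : Fin p → ℕ}
    {v : ℕ × ℕ × ℕ} (h : Dexp α τ g v ≠ 0) :
    ∃ i : Fin p, v = ((i : ℕ), α (τ i), g i) := by
  classical
  unfold Dexp at h
  rw [Finsupp.finset_sum_apply] at h
  obtain ⟨i, -, hi⟩ := Finset.exists_ne_zero_of_sum_ne_zero h
  refine ⟨i, ?_⟩
  rw [Finsupp.single_apply] at hi
  by_contra hv
  exact hi (if_neg (fun hh => hv hh.symm))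

lemma Dexp_le_one {p : ℕ} (α : Fin p → ℕ) (τ : Fin p → Fin p) (g : Fin p → ℕ)
    (v : ℕ × ℕ × ℕ) : Dexp α τ g v ≤ 1 := by
  by_cases h : Dexp α τ g v = 0
  · omega
  · obtain ⟨i, rfl⟩ := Dexp_ne_zero h
    rw [Dexp_apply]
    split <;> omega

lemma Dexp_self {p : ℕ} (α : Fin p → ℕ) (τ : Fin p → Fin p) (g : Fin p → ℕ) (i : Fin p) :
    Dexp α τ g ((i : ℕ), α (τ i), g i) = 1 := by
  rw [Dexp_apply]; simp

lemma Dexp_total {p : ℕ} (α : Fin p → ℕ) (τ : Fin p → Fin p) (g : Fin p → ℕ) :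
    ((Dexp α τ g).sum fun _ x => x) = p := by
  classical
  unfold Dexp
  rw [← Finsupp.sum_finset_sum_index (fun _ => rfl) (fun _ _ _ => rfl)]
  simp [Finsupp.sum_single_index]

lemma Dexp_inj {p : ℕ} {α : Fin p → ℕ} (hα : StrictMono α) {τ τ' : Fin p → Fin p}
    {g g' : Fin p → ℕ} (h : Dexp α τ g = Dexp α τ' g') : τ = τ' ∧ g = g' := by
  have key : ∀ i, τ i = τ' i ∧ g i = g' i := by
    intro i
    have h1 := Dexp_self α τ g i
    rw [h, Dexp_apply] at h1
    split at h1
    · next hh => exact ⟨hα.injective hh.1, hh.2⟩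
    · omega
  exact ⟨funext fun i => (key i).1, funext fun i => (key i).2⟩


/-! ### the lead permutation and levels -/

def s0 (p a : ℕ) (hp : 0 < p) (c : Fin p) : Fin p :=
  if h : (c : ℕ) < a % p then ⟨a % p - 1 - c, by have := Nat.mod_lt a hp; omega⟩
  else ⟨a % p + (p - 1 - c), by have := Nat.mod_lt a hp; have := c.isLt; omega⟩

lemma s0_val (p a : ℕ) (hp : 0 < p) (c : Fin p) :
    (s0 p a hp c : ℕ) = if (c : ℕ) < a % p then a % p - 1 - c else a % p + (p - 1 - c) := by
  unfold s0; split_ifs <;> rfl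

lemma s0_invol (p a : ℕ) (hp : 0 < p) : Function.Involutive (s0 p a hp) := by
  intro c
  have hr := Nat.mod_lt a hp
  have hc := c.isLt
  apply Fin.ext
  simp only [s0_val]
  split_ifs <;> omega

def f0 (p a : ℕ) (c : Fin p) : ℕ :=
  if (c : ℕ) < a % p then a / p + 1 else a / p

lemma f0_comp_s0 (p a : ℕ) (hp : 0 < p) (c : Fin p) : f0 p a (s0 p a hp c) = f0 p a c := by
  have hr := Nat.mod_lt a hp
  have hc := c.isLt
  unfold f0
  simp only [s0_val]
  split_ifs <;> omega

lemma sum_f0 (p a : ℕ) (hp : 0 < p) : ∑ i : Fin p, f0 p a i = a := by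
  have hr := Nat.mod_lt a hp
  have h1 : ∀ i : Fin p, f0 p a i = a / p + (if (i : ℕ) < a % p then 1 else 0) := by
    intro i; unfold f0; split <;> omega
  simp only [h1]
  rw [Finset.sum_add_distrib, Finset.sum_const, Finset.card_univ, Fintype.card_fin,
    Fin.sum_univ_eq_sum_range (fun x => if x < a % p then (1:ℕ) else 0) p]
  have h2 : ∀ x ∈ Finset.range p, (if x < a % p then (1:ℕ) else 0)
      = if x ∈ Finset.range (a % p) then 1 else 0 := by
    intro x _; simp [Finset.mem_range]
  rw [Finset.sum_congr rfl h2, Finset.sum_ite_mem,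
    Finset.inter_eq_right.mpr (Finset.range_subset_range.mpr (by omega)), Finset.sum_const]
  simp only [Finset.card_range, smul_eq_mul, mul_one]
  exact Nat.div_add_mod a p

lemma f0_le (p a n : ℕ) (hp : 0 < p) (ha : a ≤ n * p) (i : Fin p) : f0 p a i ≤ n := by
  unfold f0
  split
  · next h =>
    have hlt : a / p < n := by
      rcases lt_or_eq_of_le ha with h' | rfl
      · exact (Nat.div_lt_iff_lt_mul hp).2 h'
      · rw [Nat.mul_mod_left] at h; omega
    omega
  · have := Nat.div_le_div_right (c := p) ha
    rwa [Nat.mul_div_cancel _ hp] at this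

def rotf (p a : ℕ) (hp : 0 < p) (t : Fin p) : Fin p :=
  if h : (t : ℕ) < p - a % p then
    ⟨a % p + t, by have := Nat.mod_lt a hp; have := t.isLt; omega⟩
  else ⟨(t : ℕ) - (p - a % p), by have := t.isLt; omega⟩

lemma rotf_val (p a : ℕ) (hp : 0 < p) (t : Fin p) :
    (rotf p a hp t : ℕ) = if (t : ℕ) < p - a % p then a % p + t else (t : ℕ) - (p - a % p) := by
  unfold rotf; split_ifs <;> rfl

def rotg (p a : ℕ) (hp : 0 < p) (i : Fin p) : Fin p :=
  if h : (i : ℕ) < a % p then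
    ⟨(i : ℕ) + (p - a % p), by have := Nat.mod_lt a hp; omega⟩
  else ⟨(i : ℕ) - a % p, by have := i.isLt; omega⟩

lemma rotg_val (p a : ℕ) (hp : 0 < p) (i : Fin p) :
    (rotg p a hp i : ℕ) = if (i : ℕ) < a % p then (i : ℕ) + (p - a % p) else (i : ℕ) - a % p := by
  unfold rotg; split_ifs <;> rfl

def rot (p a : ℕ) (hp : 0 < p) : Equiv.Perm (Fin p) where
  toFun := rotf p a hp
  invFun := rotg p a hp
  left_inv := by
    intro t
    have h1 := Nat.mod_lt a hp; have h2 := t.isLt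
    apply Fin.ext
    simp only [rotg_val, rotf_val]
    split_ifs <;> omega
  right_inv := by
    intro i
    have h1 := Nat.mod_lt a hp; have h2 := i.isLt
    apply Fin.ext
    simp only [rotf_val, rotg_val]
    split_ifs <;> omega

lemma rot_apply (p a : ℕ) (hp : 0 < p) (t : Fin p) : rot p a hp t = rotf p a hp t := rfl

lemma lead_eq_Dexp (p a : ℕ) (hp : 0 < p) (α : Fin p → ℕ) :
    leadExp α a = Dexp α (s0 p a hp) (f0 p a) := by
  unfold leadExp Dexp
  apply Fintype.sum_equiv (rot p a hp)
  intro t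
  have hr := Nat.mod_lt a hp
  have ht := t.isLt
  rw [rot_apply]
  by_cases h : (t : ℕ) < p - a % p
  · rw [if_pos h]
    have h3 : (rotf p a hp t : ℕ) = a % p + t := by rw [rotf_val]; rw [if_pos h]
    have hs : α (s0 p a hp (rotf p a hp t)) = α ⟨p - 1 - t, by omega⟩ := by
      congr 1
      apply Fin.ext
      rw [s0_val]; simp only [h3]; rw [if_neg (by omega)]; all_goals omega
    have hf : f0 p a (rotf p a hp t) = a / p := by
      unfold f0; simp only [h3]; rw [if_neg (by omega)]
    rw [hs, hf]; simp only [h3]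
  · rw [if_neg h]
    have h3 : (rotf p a hp t : ℕ) = (t : ℕ) - (p - a % p) := by rw [rotf_val]; rw [if_neg h]
    have hs : α (s0 p a hp (rotf p a hp t))
        = α ⟨a % p - 1 - ((t : ℕ) - (p - a % p)), by omega⟩ := by
      congr 1
      apply Fin.ext
      rw [s0_val]; simp only [h3]; rw [if_pos (by omega)]
    have hf : f0 p a (rotf p a hp t) = a / p + 1 := by
      unfold f0; simp only [h3]; rw [if_pos (by omega)]
    rw [hs, hf]; simp only [h3]

/-! ### the core minimality argument -/

def rho (p a : ℕ) (i : Fin p) : ℕ :=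
  if (i : ℕ) < a % p then (i : ℕ) + (p - a % p) else (i : ℕ) - a % p

lemma rank_eq_iff {p m : ℕ} {i j c i' j' c' : ℕ} (hi : i < p) (hi' : i' < p)
    (hj : j < m + p) (hj' : j' < m + p)
    (h : varRank p m (i, j, c) = varRank p m (i', j', c')) : i = i' ∧ j = j' ∧ c = c' := by
  by_contra hc
  have h2 : (c < c' ∨ (c = c' ∧ (i < i' ∨ (i = i' ∧ j < j')))) ∨
      (c' < c ∨ (c' = c ∧ (i' < i ∨ (i' = i ∧ j' < j)))) := by omega
  rcases h2 with h2 | h2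
  · exact absurd (rank_lt_of_lex hi hj h2) (by omega)
  · exact absurd (rank_lt_of_lex hi' hj' h2) (by omega)

lemma core {p : ℕ} (m a : ℕ) (hp : 0 < p) (α : Fin p → ℕ) (hα : StrictMono α)
    (hbd : ∀ i, α i < m + p) (τ : Fin p → Fin p) (hτ : Function.Injective τ)
    (g : Fin p → ℕ) (hg : ∑ i, g i = a)
    (hne : Dexp α τ g ≠ Dexp α (s0 p a hp) (f0 p a)) :
    ∃ v, Dexp α (s0 p a hp) (f0 p a) v < Dexp α τ g v ∧
      ∀ w, varRank p m w < varRank p m v → Dexp α τ g w = Dexp α (s0 p a hp) (f0 p a) w := by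
  classical
  set d := Dexp α τ g with hd
  set e := Dexp α (s0 p a hp) (f0 p a) with he
  have hr : a % p < p := Nat.mod_lt a hp
  obtain ⟨w₀, hw₀⟩ := Finsupp.ne_iff.1 hne
  have hmemS : ∀ w, d w ≠ e w → w ∈ (d.support ∪ e.support).filter (fun w => d w ≠ e w) := by
    intro w hw
    rw [Finset.mem_filter, Finset.mem_union, Finsupp.mem_support_iff, Finsupp.mem_support_iff]
    exact ⟨by omega, hw⟩
  obtain ⟨v, hvS, hvmin⟩ := Finset.exists_min_image _ (varRank p m) ⟨w₀, hmemS w₀ hw₀⟩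
  have hbelow : ∀ w, varRank p m w < varRank p m v → d w = e w := by
    intro w hw
    by_contra hc
    exact absurd (hvmin w (hmemS w hc)) (by omega)
  refine ⟨v, ?_, hbelow⟩
  have hdvne : d v ≠ e v := (Finset.mem_filter.1 hvS).2
  rcases Nat.lt_or_ge (e v) (d v) with hlt | hge
  · exact hlt
  exfalso
  have hle1 := Dexp_le_one α (s0 p a hp) (f0 p a) v
  have hev1 : e v ≠ 0 := by rw [he] at *; omega
  obtain ⟨i₀, rfl⟩ := Dexp_ne_zero (he ▸ hev1)
  have hev1' : e ((i₀ : ℕ), α (s0 p a hp i₀), f0 p a i₀) = 1 := by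
    rw [he]; exact Dexp_self _ _ _ _
  have hdv0 : d ((i₀ : ℕ), α (s0 p a hp i₀), f0 p a i₀) = 0 := by omega
  have hranke : ∀ i i' : Fin p,
      varRank p m ((i : ℕ), α (s0 p a hp i), f0 p a i)
        < varRank p m ((i' : ℕ), α (s0 p a hp i'), f0 p a i') ↔ rho p a i < rho p a i' := by
    intro i i'
    rw [rank_lt_iff i.isLt i'.isLt (hbd _) (hbd _), hα.lt_iff_lt, Fin.lt_def, s0_val, s0_val]
    unfold f0 rho
    have h1 := i.isLt; have h2 := i'.isLt
    split_ifs <;> omega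
  set q := rho p a i₀ with hq
  have step1 : ∀ i : Fin p, rho p a i < q → τ i = s0 p a hp i ∧ g i = f0 p a i := by
    intro i hi
    have h1 : d ((i : ℕ), α (s0 p a hp i), f0 p a i) = 1 := by
      rw [hbelow _ ((hranke i i₀).2 hi), he]
      exact Dexp_self _ _ _ _
    rw [hd, Dexp_apply] at h1
    split at h1
    · next hh => exact ⟨(hα.injective hh.1).symm, hh.2.symm⟩
    · exact absurd h1 (by omega)
  have step2 : ∀ i : Fin p, ¬ rho p a i < q →
      f0 p a i₀ < g i ∨ (f0 p a i₀ = g i ∧ ((i₀ : ℕ) < (i : ℕ) ∨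
        ((i₀ : ℕ) = (i : ℕ) ∧ α (s0 p a hp i₀) < α (τ i)))) := by
    intro i hi
    have h1 : d ((i : ℕ), α (τ i), g i) = 1 := by rw [hd]; exact Dexp_self _ _ _ _
    have hnlt : ¬ varRank p m ((i : ℕ), α (τ i), g i)
        < varRank p m ((i₀ : ℕ), α (s0 p a hp i₀), f0 p a i₀) := by
      intro hltv
      have h2 := hbelow _ hltv
      rw [h1, he, Dexp_apply] at h2
      split at h2
      · next hh =>
        rw [hh.1, hh.2] at hltv
        exact hi ((hranke i i₀).1 hltv)
      · exact absurd h2 (by omega)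
    have hnev : ((i : ℕ), α (τ i), g i) ≠ ((i₀ : ℕ), α (s0 p a hp i₀), f0 p a i₀) := by
      intro hcontr
      rw [hcontr] at h1
      omega
    rcases Nat.lt_trichotomy (varRank p m ((i : ℕ), α (τ i), g i))
      (varRank p m ((i₀ : ℕ), α (s0 p a hp i₀), f0 p a i₀)) with ht | ht | ht
    · exact absurd ht hnlt
    · obtain ⟨e1, e2, e3⟩ := rank_eq_iff i.isLt i₀.isLt (hbd _) (hbd _) ht
      exact absurd (by rw [e1, e2, e3]) hnev
    · exact (rank_lt_iff i₀.isLt i.isLt (hbd _) (hbd _)).1 ht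
  have step2' : ∀ i : Fin p, ¬ rho p a i < q → f0 p a i ≤ g i := by
    intro i hi
    rcases step2 i hi with h2 | ⟨h2a, h2b | ⟨h2c, -⟩⟩
    · unfold f0 at h2 ⊢; split_ifs at h2 ⊢ <;> omega
    · unfold f0 at h2a ⊢; split_ifs at h2a ⊢ <;> omega
    · unfold f0 at h2a ⊢; split_ifs at h2a ⊢ <;> omega
  have hstep3 : ∀ i : Fin p, g i = f0 p a i := by
    have hsplit := Finset.sum_filter_add_sum_filter_not Finset.univ (fun i => rho p a i < q) g
    have hsplit2 := Finset.sum_filter_add_sum_filter_not Finset.univ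
      (fun i => rho p a i < q) (f0 p a)
    have hBeq : ∑ i ∈ Finset.univ.filter (fun i => rho p a i < q), g i
        = ∑ i ∈ Finset.univ.filter (fun i => rho p a i < q), f0 p a i :=
      Finset.sum_congr rfl fun i hi => (step1 i (Finset.mem_filter.1 hi).2).2
    have hCle : ∀ i ∈ Finset.univ.filter (fun i => ¬ rho p a i < q), f0 p a i ≤ g i :=
      fun i hi => step2' i (Finset.mem_filter.1 hi).2
    have htot : ∑ i, g i = ∑ i, f0 p a i := by rw [hg, sum_f0 p a hp]
    have hCeq : ∑ i ∈ Finset.univ.filter (fun i => ¬ rho p a i < q), f0 p a i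
        = ∑ i ∈ Finset.univ.filter (fun i => ¬ rho p a i < q), g i := by omega
    have hCeq' := (Finset.sum_eq_sum_iff_of_le hCle).1 hCeq
    intro i
    by_cases hcase : rho p a i < q
    · exact (step1 i hcase).2
    · exact (hCeq' i (Finset.mem_filter.2 ⟨Finset.mem_univ i, hcase⟩)).symm
  have hq_not : ¬ rho p a i₀ < q := lt_irrefl _
  rcases step2 i₀ hq_not with h4 | ⟨h4a, h4b | ⟨h4c, h4d⟩⟩
  · rw [hstep3 i₀] at h4; omega
  · omega
  · have hσ : s0 p a hp i₀ < τ i₀ := hα.lt_iff_lt.1 h4d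
    set i' := s0 p a hp (τ i₀) with hi'
    have hrho' : rho p a i' < q := by
      have h5 := Fin.lt_def.1 hσ
      have h6 := (τ i₀).isLt
      have h7 := i₀.isLt
      rw [hq, hi']
      unfold rho
      simp only [s0_val] at h5 ⊢
      split_ifs at h5 ⊢ <;> omega
    have h8 := (step1 i' hrho').1
    rw [hi', s0_invol p a hp (τ i₀)] at h8
    have h9 := hτ h8
    rw [hi', h9] at hrho'
    exact hq_not hrho'

end InitMin

namespace InitMin
open Finset

noncomputable def Eexp {p : ℕ} (α : Fin p → ℕ) (σ : Equiv.Perm (Fin p)) (f : Fin p → ℕ) :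
    (ℕ × ℕ × ℕ) →₀ ℕ :=
  ∑ i : Fin p, Finsupp.single ((σ i : ℕ), α i, f i) 1

lemma Eexp_eq_Dexp {p : ℕ} (α : Fin p → ℕ) (σ : Equiv.Perm (Fin p)) (f : Fin p → ℕ) :
    Eexp α σ f = Dexp α (⇑σ⁻¹) (f ∘ ⇑σ⁻¹) := by
  unfold Eexp Dexp
  apply Fintype.sum_equiv σ
  intro i
  simp

lemma prod_X_monomial {R : Type*} [CommSemiring R] {ι vars : Type*} [DecidableEq vars]
    (s : Finset ι) (v : ι → vars) :
    (∏ i ∈ s, (X (v i) : MvPolynomial vars R)) =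
      monomial (∑ i ∈ s, Finsupp.single (v i) 1) 1 := by
  classical
  induction s using Finset.cons_induction with
  | empty => simp
  | cons a s ha ih =>
    rw [Finset.prod_cons, Finset.sum_cons, ih, ← pow_one (X (v a)), X_pow_eq_monomial,
      monomial_mul, one_mul]

lemma coeff_coeffMinor (k : Type) [Field k] (n : ℕ) {p : ℕ} (α : Fin p → ℕ) (a : ℕ)
    (d : (ℕ × ℕ × ℕ) →₀ ℕ) :
    MvPolynomial.coeff d (coeffMinor k n α a) =
      ∑ σ : Equiv.Perm (Fin p), ∑ f ∈ Fintype.piFinset (fun _ : Fin p => Finset.range (n + 1)),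
        if a = ∑ i, f i then
          (if Eexp α σ f = d then ((Equiv.Perm.sign σ : ℤ) : k) else 0) else 0 := by
  classical
  unfold coeffMinor
  rw [Matrix.det_apply', Polynomial.finset_sum_coeff, MvPolynomial.coeff_sum]
  refine Finset.sum_congr rfl fun σ _ => ?_
  have h1 : (∏ i, (Matrix.of fun i j : Fin p =>
      ∑ l ∈ Finset.range (n + 1),
        Polynomial.C (X ((i : ℕ), α j, l) : MvPolynomial (ℕ × ℕ × ℕ) k) *
          Polynomial.X ^ l) (σ i) i)
      = ∑ f ∈ Fintype.piFinset (fun _ : Fin p => Finset.range (n + 1)),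
        Polynomial.C (∏ i, (X ((σ i : ℕ), α i, f i) : MvPolynomial (ℕ × ℕ × ℕ) k)) *
          Polynomial.X ^ (∑ i, f i) := by
    simp only [Matrix.of_apply]
    rw [Finset.prod_univ_sum]
    refine Finset.sum_congr rfl fun f _ => ?_
    rw [Finset.prod_mul_distrib, ← map_prod, Finset.prod_pow_eq_pow_sum]
  rw [h1, Finset.mul_sum, Polynomial.finset_sum_coeff, MvPolynomial.coeff_sum]
  refine Finset.sum_congr rfl fun f _ => ?_
  rw [show ((Equiv.Perm.sign σ : ℤ) : Polynomial (MvPolynomial (ℕ × ℕ × ℕ) k))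
      = Polynomial.C ((Equiv.Perm.sign σ : ℤ) : MvPolynomial (ℕ × ℕ × ℕ) k) from
    (map_intCast (Polynomial.C : MvPolynomial (ℕ × ℕ × ℕ) k →+* Polynomial (MvPolynomial (ℕ × ℕ × ℕ) k)) _).symm]
  rw [← mul_assoc, ← map_mul, Polynomial.coeff_C_mul, Polynomial.coeff_X_pow,
    mul_ite, mul_one, mul_zero, apply_ite (MvPolynomial.coeff d), MvPolynomial.coeff_zero]
  congr 1
  rw [prod_X_monomial Finset.univ (fun i : Fin p => ((σ i : ℕ), α i, f i)),
    show ((Equiv.Perm.sign σ : ℤ) : MvPolynomial (ℕ × ℕ × ℕ) k)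
      = C ((Equiv.Perm.sign σ : ℤ) : k) from (map_intCast (C : k →+* MvPolynomial (ℕ × ℕ × ℕ) k) _).symm,
    C_mul_monomial, mul_one, MvPolynomial.coeff_monomial]
  rfl

end InitMin

namespace InitMin

noncomputable def s0perm (p a : ℕ) (hp : 0 < p) : Equiv.Perm (Fin p) :=
  (s0_invol p a hp).toPerm _

lemma s0perm_coe (p a : ℕ) (hp : 0 < p) : ⇑(s0perm p a hp) = s0 p a hp :=
  Function.Involutive.coe_toPerm _

lemma s0perm_inv (p a : ℕ) (hp : 0 < p) : (s0perm p a hp)⁻¹ = s0perm p a hp :=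
  (s0_invol p a hp).toPerm_symm

lemma Eexp_lead (p a : ℕ) (hp : 0 < p) (α : Fin p → ℕ) :
    Eexp α (s0perm p a hp) (f0 p a) = leadExp α a := by
  rw [Eexp_eq_Dexp, lead_eq_Dexp p a hp α, s0perm_inv, s0perm_coe]
  congr 1
  funext i
  exact f0_comp_s0 p a hp i

lemma Eexp_lead_unique (p a : ℕ) (hp : 0 < p) {α : Fin p → ℕ} (hα : StrictMono α)
    {σ : Equiv.Perm (Fin p)} {f : Fin p → ℕ} (hf : Eexp α σ f = leadExp α a) :
    σ = s0perm p a hp ∧ f = f0 p a := by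
  rw [Eexp_eq_Dexp, lead_eq_Dexp p a hp α] at hf
  obtain ⟨h1, h2⟩ := Dexp_inj hα hf
  have hσ : σ⁻¹ = s0perm p a hp :=
    Equiv.coe_fn_injective (show ⇑σ⁻¹ = ⇑(s0perm p a hp) by rw [s0perm_coe]; exact h1)
  have hσ2 : σ = s0perm p a hp := by
    rw [← s0perm_inv, ← hσ, inv_inv]
  refine ⟨hσ2, ?_⟩
  funext i
  have h3 := congrFun h2 (σ i)
  simp only [Function.comp_apply, Equiv.Perm.inv_def, Equiv.symm_apply_apply] at h3
  rw [h3, hσ2, s0perm_coe, f0_comp_s0]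

end InitMin

/-- with respect to the degree reverse lexicographic order refining the
variable order `x_{i,j}^{(l)} < x_{i',j'}^{(l')}` iff `(l,i,j) < (l',i',j')`
lexicographically, the initial monomial of `φ(α^{(a)})` is
`x_{r+1,α_p}^{(l)} ⋯ x_{p,α_{r+1}}^{(l)} x_{1,α_r}^{(l+1)} ⋯ x_{r,α_1}^{(l+1)}`:
this monomial occurs in `φ(α^{(a)})`, and every other monomial of `φ(α^{(a)})`
is smaller. -/
theorem initial_monomial_of_coeffMinor (k : Type) [Field k] (p m n : ℕ)
    (hp : 0 < p) (hm : 0 < m)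
    (α : Fin p → ℕ) (hα : StrictMono α) (hbd : ∀ i, α i < m + p)
    (a : ℕ) (ha : a ≤ n * p) :
    MvPolynomial.coeff (leadExp α a) (coeffMinor k n α a) ≠ 0 ∧
    ∀ d ∈ (coeffMinor k n α a).support, d ≠ leadExp α a →
      drlLower p m d (leadExp α a) := by
  classical
  constructor
  · rw [InitMin.coeff_coeffMinor]
    have hf0mem : InitMin.f0 p a ∈ Fintype.piFinset (fun _ : Fin p => Finset.range (n + 1)) := by
      rw [Fintype.mem_piFinset]
      intro i
      rw [Finset.mem_range]
      have := InitMin.f0_le p a n hp ha i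
      omega
    rw [Finset.sum_eq_single_of_mem (InitMin.s0perm p a hp) (Finset.mem_univ _)]
    · rw [Finset.sum_eq_single_of_mem (InitMin.f0 p a) hf0mem]
      · rw [if_pos (InitMin.sum_f0 p a hp).symm, if_pos (InitMin.Eexp_lead p a hp α)]
        rcases Int.units_eq_one_or (Equiv.Perm.sign (InitMin.s0perm p a hp)) with h | h <;>
          rw [h] <;> simp
      · intro f hfm hfne
        split_ifs with h1 h2
        · exact absurd (InitMin.Eexp_lead_unique p a hp hα h2).2 hfne
        · rfl
        · rfl
    · intro σ hσm hσne
      apply Finset.sum_eq_zero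
      intro f hf
      split_ifs with h1 h2
      · exact absurd (InitMin.Eexp_lead_unique p a hp hα h2).1 hσne
      · rfl
      · rfl
  · intro d hd hdne
    rw [MvPolynomial.mem_support_iff, InitMin.coeff_coeffMinor] at hd
    obtain ⟨σ, -, hσ⟩ := Finset.exists_ne_zero_of_sum_ne_zero hd
    obtain ⟨f, hfmem, hf⟩ := Finset.exists_ne_zero_of_sum_ne_zero hσ
    have hcond : a = ∑ i, f i ∧ InitMin.Eexp α σ f = d := by
      by_contra hc
      apply hf
      by_cases h1 : a = ∑ i, f i
      · rw [if_pos h1, if_neg (by tauto)]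
      · rw [if_neg h1]
    obtain ⟨hsum, hEd⟩ := hcond
    have hD : InitMin.Dexp α (⇑σ⁻¹) (f ∘ ⇑σ⁻¹) = d := by
      rw [← InitMin.Eexp_eq_Dexp]; exact hEd
    have hE : InitMin.Dexp α (InitMin.s0 p a hp) (InitMin.f0 p a) = leadExp α a :=
      (InitMin.lead_eq_Dexp p a hp α).symm
    have hgsum : ∑ i, (f ∘ ⇑σ⁻¹) i = a := by
      simp only [Function.comp_apply]
      rw [Equiv.sum_comp σ⁻¹ f]
      exact hsum.symm
    have hne : InitMin.Dexp α (⇑σ⁻¹) (f ∘ ⇑σ⁻¹)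
        ≠ InitMin.Dexp α (InitMin.s0 p a hp) (InitMin.f0 p a) := by
      rw [hD, hE]; exact hdne
    obtain ⟨v, h1, h2⟩ := InitMin.core m a hp α hα hbd (⇑σ⁻¹) (Equiv.injective _)
      (f ∘ ⇑σ⁻¹) hgsum hne
    rw [hD, hE] at h1 h2
    refine Or.inr ⟨?_, ⟨v, h1, h2⟩⟩
    rw [← hD, ← hE, InitMin.Dexp_total, InitMin.Dexp_total]
end

section
/- For incomparable α^{(a)}, β^{(b)} in C^q_{p,m}, the binomial α^{(a)}·β^{(b)} − (α^{(a)}∨β^{(b)})·(α^{(a)}∧β^{(b)}) lies in the kernel of the monomial map ψ : k[C^q_{p,m}] → k[X] sending each variable γ^{(c)} to the initial monomial in_≺(φ(γ^{(c)})). -/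
open MvPolynomial

/-- The monomial map `ψ` on a single variable: `α^{(a)} ↦ in_≺(φ(α^{(a)}))`. -/
noncomputable def psiMono (k : Type) [Field k] {p m : ℕ} (z : QElt p m) :
    MvPolynomial (ℕ × ℕ × ℕ) k :=
  monomial (leadExp z.1.1 z.2) 1

/-! ### Auxiliary lemmas -/

lemma dm_mod (p x l : ℕ) (hx : x < p) : (p * l + x) % p = x := by
  rw [Nat.mul_add_mod, Nat.mod_eq_of_lt hx]

lemma dm_div (p x l : ℕ) (hp : 0 < p) (hx : x < p) : (p * l + x) / p = l := by
  rw [Nat.mul_add_div hp, Nat.div_eq_of_lt hx]; omega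

noncomputable def cExp {p : ℕ} (hp : 0 < p) (α : Fin p → ℕ) (a : ℕ) : (ℕ × ℕ × ℕ) →₀ ℕ :=
  ∑ s : Fin p,
    Finsupp.single ((s : ℕ), α ⟨(a + p - 1 - (s : ℕ)) % p, Nat.mod_lt _ hp⟩,
      (a + p - 1 - (s : ℕ)) / p) 1

lemma mod_small_add {p : ℕ} (t : Fin p) (r : ℕ) (hr : r < p) :
    ((t : ℕ) + r) % p = if (t : ℕ) + r < p then (t : ℕ) + r else (t : ℕ) + r - p := by
  split
  · exact Nat.mod_eq_of_lt ‹_›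
  · rw [Nat.mod_eq_sub_mod (by omega)]
    exact Nat.mod_eq_of_lt (by have := t.isLt; omega)

lemma leadExp_eq_cExp {p : ℕ} (hp : 0 < p) (α : Fin p → ℕ) (a : ℕ) :
    leadExp α a = cExp hp α a := by
  obtain ⟨l, r, hrp, rfl⟩ : ∃ l r, r < p ∧ a = p * l + r :=
    ⟨a / p, a % p, Nat.mod_lt a hp, (Nat.div_add_mod a p).symm⟩
  have hr' : (p * l + r) % p = r := dm_mod p r l hrp
  have hd' : (p * l + r) / p = l := dm_div p r l hp hrp
  unfold leadExp cExp
  refine Fintype.sum_bijective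
    (fun t : Fin p => (⟨((t : ℕ) + r) % p, Nat.mod_lt _ hp⟩ : Fin p)) ?_ _ _ ?_
  · refine Finite.injective_iff_bijective.mp ?_
    intro t1 t2 h
    have h1 : ((t1 : ℕ) + r) % p = ((t2 : ℕ) + r) % p := congrArg Fin.val h
    rw [mod_small_add t1 r hrp, mod_small_add t2 r hrp] at h1
    have := t1.isLt; have := t2.isLt
    apply Fin.ext
    split_ifs at h1 <;> omega
  · intro t
    have htlt := t.isLt
    dsimp only
    by_cases hcond : (t : ℕ) < p - (p * l + r) % p
    · rw [if_pos hcond]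
      have ht' : (t : ℕ) < p - r := by rwa [hr'] at hcond
      have hs : ((t : ℕ) + r) % p = (t : ℕ) + r := Nat.mod_eq_of_lt (by omega)
      have hA : p * l + r + p - 1 - ((t : ℕ) + r) % p = p * l + (p - 1 - (t : ℕ)) := by
        rw [hs]; omega
      have hA1 : (p * l + r + p - 1 - ((t : ℕ) + r) % p) % p = p - 1 - (t : ℕ) := by
        rw [hA]; exact dm_mod p _ l (by omega)
      have hA2 : (p * l + r + p - 1 - ((t : ℕ) + r) % p) / p = l := by
        rw [hA]; exact dm_div p _ l hp (by omega)
      refine congrArg (fun z : ℕ × ℕ × ℕ => Finsupp.single z 1) ?_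
      simp only [Prod.mk.injEq]
      refine ⟨by rw [hr', hs]; omega, ?_, by rw [hd', hA2]⟩
      exact congrArg α (Fin.ext hA1.symm)
    · rw [if_neg hcond]
      have ht' : p - r ≤ (t : ℕ) := by rw [hr'] at hcond; omega
      have hr1 : 1 ≤ r := by omega
      have hs : ((t : ℕ) + r) % p = (t : ℕ) + r - p := by
        rw [Nat.mod_eq_sub_mod (by omega)]
        exact Nat.mod_eq_of_lt (by omega)
      have hmul : p * (l + 1) = p * l + p := by ring
      have hA : p * l + r + p - 1 - ((t : ℕ) + r) % p = p * (l + 1) + (p - 1 - (t : ℕ)) := by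
        rw [hs]; omega
      have hA1 : (p * l + r + p - 1 - ((t : ℕ) + r) % p) % p = p - 1 - (t : ℕ) := by
        rw [hA]; exact dm_mod p _ (l + 1) (by omega)
      have hA2 : (p * l + r + p - 1 - ((t : ℕ) + r) % p) / p = l + 1 := by
        rw [hA]; exact dm_div p _ (l + 1) hp (by omega)
      have hv : (p * l + r) % p - 1 - ((t : ℕ) - (p - (p * l + r) % p)) = p - 1 - (t : ℕ) := by
        rw [hr']; omega
      refine congrArg (fun z : ℕ × ℕ × ℕ => Finsupp.single z 1) ?_
      simp only [Prod.mk.injEq]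
      refine ⟨by rw [hr', hs]; omega, ?_, by rw [hd', hA2]⟩
      exact congrArg α (Fin.ext (hv.trans hA1.symm))

/-! ### Meet and join functions -/

def meetF {p m : ℕ} (x y : QElt p m) : Fin p → ℕ := fun i =>
  if h : (i : ℕ) + (y.2 - x.2) < p then
    min (x.1.1 i) (y.1.1 ⟨(i : ℕ) + (y.2 - x.2), h⟩)
  else x.1.1 i

def joinF {p m : ℕ} (x y : QElt p m) : Fin p → ℕ := fun j =>
  if h : y.2 - x.2 ≤ (j : ℕ) then
    max (y.1.1 j) (x.1.1 ⟨(j : ℕ) - (y.2 - x.2), by have := j.isLt; omega⟩)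
  else y.1.1 j

lemma meetF_mono {p m : ℕ} (x y : QElt p m) : StrictMono (meetF x y) := by
  intro i j hij
  have hij' : (i : ℕ) < (j : ℕ) := hij
  have hx : x.1.1 i < x.1.1 j := x.1.2.1 hij
  unfold meetF
  split <;> rename_i h1 <;> split <;> rename_i h2
  · have hy : y.1.1 ⟨(i : ℕ) + (y.2 - x.2), h1⟩ < y.1.1 ⟨(j : ℕ) + (y.2 - x.2), h2⟩ :=
      y.1.2.1 (by simp only [Fin.mk_lt_mk]; omega)
    omega
  · omega
  · omega
  · omega

lemma meetF_bd {p m : ℕ} (x y : QElt p m) : ∀ i, 1 ≤ meetF x y i ∧ meetF x y i ≤ m + p := by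
  intro i
  have h1 := x.1.2.2 i
  unfold meetF
  split
  · rename_i h
    have h2 := y.1.2.2 ⟨(i : ℕ) + (y.2 - x.2), h⟩
    omega
  · omega

lemma joinF_mono {p m : ℕ} (x y : QElt p m) : StrictMono (joinF x y) := by
  intro i j hij
  have hij' : (i : ℕ) < (j : ℕ) := hij
  have hy : y.1.1 i < y.1.1 j := y.1.2.1 hij
  unfold joinF
  split <;> rename_i h1 <;> split <;> rename_i h2
  · have hx : x.1.1 ⟨(i : ℕ) - (y.2 - x.2), by have := i.isLt; omega⟩ <
        x.1.1 ⟨(j : ℕ) - (y.2 - x.2), by have := j.isLt; omega⟩ :=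
      x.1.2.1 (by simp only [Fin.mk_lt_mk]; omega)
    omega
  · omega
  · omega
  · omega

lemma joinF_bd {p m : ℕ} (x y : QElt p m) : ∀ j, 1 ≤ joinF x y j ∧ joinF x y j ≤ m + p := by
  intro j
  have h1 := y.1.2.2 j
  unfold joinF
  split
  · rename_i h
    have h2 := x.1.2.2 ⟨(j : ℕ) - (y.2 - x.2), by have := j.isLt; omega⟩
    omega
  · omega

/-! ### Main lemma -/

theorem main_lemma (k : Type) [Field k] {p m : ℕ} (hp : 0 < p)
    (x y u v : QElt p m) (hab : x.2 ≤ y.2)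
    (hux : qle u x) (huy : qle u y)
    (humax : ∀ z : QElt p m, qle z x → qle z y → qle z u)
    (hxv : qle x v) (hyv : qle y v)
    (hvmin : ∀ z : QElt p m, qle x z → qle y z → qle v z) :
    psiMono k x * psiMono k y = psiMono k v * psiMono k u := by
  -- the meet candidate
  have hwx : qle ((⟨meetF x y, meetF_mono x y, meetF_bd x y⟩, x.2) : QElt p m) x := by
    refine ⟨le_refl _, fun i j hj => ?_⟩
    have hji : j = i := Fin.ext (by simpa using hj)
    subst hji
    show meetF x y j ≤ x.1.1 j
    unfold meetF
    split
    · exact min_le_left _ _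
    · exact le_refl _
  have hwy : qle ((⟨meetF x y, meetF_mono x y, meetF_bd x y⟩, x.2) : QElt p m) y := by
    refine ⟨hab, fun i j hj => ?_⟩
    show meetF x y i ≤ y.1.1 j
    have hjp := j.isLt
    unfold meetF
    rw [dif_pos (show (i : ℕ) + (y.2 - x.2) < p by omega)]
    have : (⟨(i : ℕ) + (y.2 - x.2), by omega⟩ : Fin p) = j := Fin.ext (by simp [hj])
    rw [this]
    exact min_le_right _ _
  have hwu := humax _ hwx hwy
  have hu2 : u.2 = x.2 := le_antisymm hux.1 hwu.1
  have hu_le_x : ∀ i : Fin p, u.1.1 i ≤ x.1.1 i := by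
    intro i
    exact hux.2 i i (by omega)
  have hu_le_y : ∀ i j : Fin p, (j : ℕ) = (i : ℕ) + (y.2 - x.2) → u.1.1 i ≤ y.1.1 j := by
    intro i j hj
    exact huy.2 i j (by omega)
  have hw_le_u : ∀ i : Fin p, meetF x y i ≤ u.1.1 i := by
    intro i
    exact hwu.2 i i (by simp [hu2])
  have huA : ∀ i j : Fin p, (j : ℕ) = (i : ℕ) + (y.2 - x.2) →
      u.1.1 i = min (x.1.1 i) (y.1.1 j) := by
    intro i j hj
    refine le_antisymm (le_min (hu_le_x i) (hu_le_y i j hj)) ?_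
    have h := hw_le_u i
    have hjp := j.isLt
    unfold meetF at h
    rw [dif_pos (show (i : ℕ) + (y.2 - x.2) < p by omega)] at h
    have he : (⟨(i : ℕ) + (y.2 - x.2), by omega⟩ : Fin p) = j := Fin.ext (by simp [hj])
    rwa [he] at h
  have huB : ∀ i : Fin p, p ≤ (i : ℕ) + (y.2 - x.2) → u.1.1 i = x.1.1 i := by
    intro i hi
    refine le_antisymm (hu_le_x i) ?_
    have h := hw_le_u i
    unfold meetF at h
    rwa [dif_neg (by omega)] at h
  -- the join candidate
  have hxV : qle x ((⟨joinF x y, joinF_mono x y, joinF_bd x y⟩, y.2) : QElt p m) := by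
    refine ⟨hab, fun i j hj => ?_⟩
    show x.1.1 i ≤ joinF x y j
    unfold joinF
    rw [dif_pos (show y.2 - x.2 ≤ (j : ℕ) by omega)]
    have he : (⟨(j : ℕ) - (y.2 - x.2), by have := j.isLt; omega⟩ : Fin p) = i :=
      Fin.ext (by simp [hj])
    rw [he]
    exact le_max_right _ _
  have hyV : qle y ((⟨joinF x y, joinF_mono x y, joinF_bd x y⟩, y.2) : QElt p m) := by
    refine ⟨le_refl _, fun i j hj => ?_⟩
    have hji : j = i := Fin.ext (by simpa using hj)
    subst hji
    show y.1.1 j ≤ joinF x y j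
    unfold joinF
    split
    · exact le_max_left _ _
    · exact le_refl _
  have hvV := hvmin _ hxV hyV
  have hv2 : v.2 = y.2 := le_antisymm hvV.1 hyv.1
  have hy_le_v : ∀ j : Fin p, y.1.1 j ≤ v.1.1 j := by
    intro j
    exact hyv.2 j j (by omega)
  have hx_le_v : ∀ i j : Fin p, (j : ℕ) = (i : ℕ) + (y.2 - x.2) → x.1.1 i ≤ v.1.1 j := by
    intro i j hj
    exact hxv.2 i j (by omega)
  have hv_le_V : ∀ j : Fin p, v.1.1 j ≤ joinF x y j := by
    intro j
    exact hvV.2 j j (by simp [hv2])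
  have hvA : ∀ i j : Fin p, (j : ℕ) = (i : ℕ) + (y.2 - x.2) →
      v.1.1 j = max (y.1.1 j) (x.1.1 i) := by
    intro i j hj
    refine le_antisymm ?_ (max_le (hy_le_v j) (hx_le_v i j hj))
    have h := hv_le_V j
    unfold joinF at h
    rw [dif_pos (show y.2 - x.2 ≤ (j : ℕ) by omega)] at h
    have he : (⟨(j : ℕ) - (y.2 - x.2), by have := j.isLt; omega⟩ : Fin p) = i :=
      Fin.ext (by simp [hj])
    rwa [he] at h
  have hvB : ∀ j : Fin p, (j : ℕ) < y.2 - x.2 → v.1.1 j = y.1.1 j := by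
    intro j hjd
    refine le_antisymm ?_ (hy_le_v j)
    have h := hv_le_V j
    unfold joinF at h
    rwa [dif_neg (by omega)] at h
  -- reduce to exponent identity
  suffices hkey : leadExp x.1.1 x.2 + leadExp y.1.1 y.2
      = leadExp v.1.1 v.2 + leadExp u.1.1 u.2 by
    unfold psiMono
    rw [monomial_mul, monomial_mul, hkey]
  rw [hu2, hv2, leadExp_eq_cExp hp x.1.1 x.2, leadExp_eq_cExp hp y.1.1 y.2,
    leadExp_eq_cExp hp v.1.1 y.2, leadExp_eq_cExp hp u.1.1 x.2]
  unfold cExp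
  rw [← Finset.sum_add_distrib, ← Finset.sum_add_distrib]
  refine Finset.sum_congr rfl fun s _ => ?_
  have hss := s.isLt
  obtain ⟨L, i, hip, hA⟩ : ∃ L i, i < p ∧ x.2 + p - 1 - (s : ℕ) = p * L + i :=
    ⟨_ / p, _ % p, Nat.mod_lt _ hp, (Nat.div_add_mod _ p).symm⟩
  have hA1 : (x.2 + p - 1 - (s : ℕ)) % p = i := by rw [hA]; exact dm_mod p i L hip
  have hA2 : (x.2 + p - 1 - (s : ℕ)) / p = L := by rw [hA]; exact dm_div p i L hp hip
  have hBsum : y.2 + p - 1 - (s : ℕ) = (x.2 + p - 1 - (s : ℕ)) + (y.2 - x.2) := by omega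
  have ei : (⟨(x.2 + p - 1 - (s : ℕ)) % p, Nat.mod_lt _ hp⟩ : Fin p) = ⟨i, hip⟩ :=
    Fin.ext hA1
  by_cases hcase : i + (y.2 - x.2) < p
  · have hB : y.2 + p - 1 - (s : ℕ) = p * L + (i + (y.2 - x.2)) := by
      rw [hBsum, hA, add_assoc]
    have hB1 : (y.2 + p - 1 - (s : ℕ)) % p = i + (y.2 - x.2) := by
      rw [hB]; exact dm_mod p _ L hcase
    have hB2 : (y.2 + p - 1 - (s : ℕ)) / p = L := by
      rw [hB]; exact dm_div p _ L hp hcase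
    have ej : (⟨(y.2 + p - 1 - (s : ℕ)) % p, Nat.mod_lt _ hp⟩ : Fin p)
        = ⟨i + (y.2 - x.2), hcase⟩ := Fin.ext hB1
    rw [ei, ej, hA2, hB2, huA ⟨i, hip⟩ ⟨i + (y.2 - x.2), hcase⟩ rfl,
      hvA ⟨i, hip⟩ ⟨i + (y.2 - x.2), hcase⟩ rfl]
    rcases le_total (x.1.1 ⟨i, hip⟩) (y.1.1 ⟨i + (y.2 - x.2), hcase⟩) with hc | hc
    · rw [min_eq_left hc, max_eq_left hc]
      exact add_comm _ _
    · rw [min_eq_right hc, max_eq_right hc]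
  · have hB : y.2 + p - 1 - (s : ℕ) = p * L + (i + (y.2 - x.2)) := by
      rw [hBsum, hA, add_assoc]
    have hj : (y.2 + p - 1 - (s : ℕ)) % p < y.2 - x.2 := by
      rw [hB, Nat.mul_add_mod]
      calc (i + (y.2 - x.2)) % p = (i + (y.2 - x.2) - p) % p :=
            Nat.mod_eq_sub_mod (by omega)
        _ ≤ i + (y.2 - x.2) - p := Nat.mod_le _ _
        _ < y.2 - x.2 := by omega
    rw [ei, hA2, huB ⟨i, hip⟩ (by simpa using le_of_not_gt hcase), hvB _ hj]
    exact add_comm _ _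

/-- for incomparable `α^{(a)}, β^{(b)}` in `C^q_{p,m}`, the binomial
`α^{(a)}·β^{(b)} − (α^{(a)}∨β^{(b)})·(α^{(a)}∧β^{(b)})` lies in the kernel of the
monomial map `ψ`; i.e. `ψ(x)ψ(y) = ψ(x∨y)ψ(x∧y)` whenever `u` is the meet and `v`
the join of the incomparable pair `x, y`. -/
theorem hibi_binomial_in_kernel (k : Type) [Field k] (p m n q : ℕ)
    (hp : 0 < p) (hm : 0 < m) (hq : q ≤ n * p)
    (x y u v : QElt p m)
    (hx : x.2 ≤ q) (hy : y.2 ≤ q) (hu : u.2 ≤ q) (hv : v.2 ≤ q)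
    (hinc : ¬ qle x y ∧ ¬ qle y x)
    (hglb : qle u x ∧ qle u y ∧ ∀ z : QElt p m, qle z x → qle z y → qle z u)
    (hlub : qle x v ∧ qle y v ∧ ∀ z : QElt p m, qle x z → qle y z → qle v z) :
    psiMono k x * psiMono k y = psiMono k v * psiMono k u := by
  obtain ⟨hux, huy, humax⟩ := hglb
  obtain ⟨hxv, hyv, hvmin⟩ := hlub
  rcases le_total x.2 y.2 with h | h
  · exact main_lemma k hp x y u v h hux huy humax hxv hyv hvmin
  · rw [mul_comm]
    exact main_lemma k hp y x u v h huy hux (fun z h1 h2 => humax z h2 h1)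
      hyv hxv (fun z h1 h2 => hvmin z h2 h1)
end

section
/- The monomial map ψ associated to C^q_{p,m} is injective on standard monomials: if two multichains α_{(1)}^{(a_1)} ≤ ⋯ ≤ α_{(j)}^{(a_j)} and β_{(1)}^{(b_1)} ≤ ⋯ ≤ β_{(j')}^{(b_{j'})} in C^q_{p,m} have ψ(product of first) = ψ(product of second) in k[X], then j = j' and the multichains are equal. -/
open MvPolynomial

/-- Index into `α` of the variable at column `r`. -/
def colIdx (p a r : ℕ) : ℕ := if r < a % p then a % p - 1 - r else p - 1 - r + a % p

/-- Level (superscript) of the variable at column `r`. -/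
def colLevel (p a r : ℕ) : ℕ := a / p + if r < a % p then 1 else 0

lemma colIdx_lt {p} (hp : 0 < p) (a : ℕ) {r : ℕ} (hr : r < p) : colIdx p a r < p := by
  have := Nat.mod_lt a hp
  unfold colIdx; split <;> omega

/-- The key (triple) of the variable at column `r`. -/
def colKey {p : ℕ} (hp : 0 < p) (α : Fin p → ℕ) (a r : ℕ) : ℕ × ℕ × ℕ :=
  (r, α ⟨colIdx p a r % p, Nat.mod_lt _ hp⟩, colLevel p a r)

lemma leadExp_eq {p : ℕ} (hp : 0 < p) (α : Fin p → ℕ) (a : ℕ) :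
    leadExp α a = ∑ r ∈ Finset.range p, Finsupp.single (colKey hp α a r) 1 := by
  have hs : a % p < p := Nat.mod_lt a hp
  have hα : ∀ (x y : ℕ) (hx : x < p) (hy : y < p), x = y → α ⟨x, hx⟩ = α ⟨y, hy⟩ := by
    rintro x y hx hy rfl; rfl
  unfold leadExp
  refine Finset.sum_nbij' (fun t : Fin p => if (t : ℕ) < p - a % p then a % p + t
      else (t : ℕ) - (p - a % p))
    (fun r => ⟨(if r < a % p then r + (p - a % p) else r - a % p) % p, Nat.mod_lt _ hp⟩)
    ?_ ?_ ?_ ?_ ?_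
  · intro t _
    have := t.isLt
    simp only [Finset.mem_range]
    split <;> omega
  · intro r _; exact Finset.mem_univ _
  · intro t _
    have ht := t.isLt
    apply Fin.ext
    simp only
    split_ifs with h1 h2 h2 <;> rw [Nat.mod_eq_of_lt (by omega)] <;> omega
  · intro r hr
    rw [Finset.mem_range] at hr
    simp only
    have hm : (if r < a % p then r + (p - a % p) else r - a % p) % p
        = if r < a % p then r + (p - a % p) else r - a % p :=
      Nat.mod_eq_of_lt (by split_ifs <;> omega)
    rw [hm]
    split_ifs <;> omega
  · intro t _
    have ht := t.isLt
    split_ifs with h1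
    · have hr : ¬ (a % p + (t : ℕ) < a % p) := by omega
      refine congrArg (fun z => Finsupp.single z 1) ?_
      unfold colKey
      simp only [Prod.mk.injEq]
      refine ⟨trivial, hα _ _ _ _ ?_, ?_⟩
      · simp only [colIdx, if_neg hr]
        rw [Nat.mod_eq_of_lt (show p - 1 - (a % p + (t:ℕ)) + a % p < p by omega)]
        omega
      · simp only [colLevel, if_neg hr]
        omega
    · have hr : (t : ℕ) - (p - a % p) < a % p := by omega
      refine congrArg (fun z => Finsupp.single z 1) ?_
      unfold colKey
      simp only [Prod.mk.injEq]
      refine ⟨trivial, hα _ _ _ _ ?_, ?_⟩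
      · simp only [colIdx, if_pos hr]
        rw [Nat.mod_eq_of_lt (show a % p - 1 - ((t:ℕ) - (p - a % p)) < p by omega)]
      · simp only [colLevel, if_pos hr]

lemma leadExp_apply {p : ℕ} (hp : 0 < p) (α : Fin p → ℕ) (a : ℕ) {r : ℕ} (hr : r < p)
    (v l : ℕ) :
    leadExp α a (r, v, l) = if colKey hp α a r = (r, v, l) then 1 else 0 := by
  rw [leadExp_eq hp, Finsupp.finset_sum_apply]
  rw [Finset.sum_eq_single r]
  · simp [Finsupp.single_apply]
  · intro b _ hb
    rw [Finsupp.single_apply, if_neg]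
    intro hkeq
    exact hb (congrArg Prod.fst hkeq)
  · intro h
    exact absurd (Finset.mem_range.2 hr) h

lemma leadExp_mass {p : ℕ} (hp : 0 < p) (α : Fin p → ℕ) (a : ℕ) :
    (leadExp α a).sum (fun _ m => m) = p := by
  rw [leadExp_eq hp, ← Finsupp.sum_finset_sum_index (fun _ => rfl) (fun _ _ _ => rfl)]
  rw [Finset.sum_congr rfl (fun r _ => Finsupp.sum_single_index rfl)]
  simp

lemma colLevel_eq {p : ℕ} (hp : 0 < p) (a : ℕ) {r : ℕ} (hr : r < p) :
    colLevel p a r = (a + (p - 1 - r)) / p := by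
  have hs : a % p < p := Nat.mod_lt a hp
  have ha : p * (a / p) + a % p = a := Nat.div_add_mod a p
  rw [show a + (p - 1 - r) = p * (a / p) + (a % p + (p - 1 - r)) by omega,
    Nat.mul_add_div hp]
  unfold colLevel
  split_ifs with h
  · rw [show (a % p + (p - 1 - r)) / p = 1 from Nat.div_eq_of_lt_le (by omega) (by omega)]
  · rw [show (a % p + (p - 1 - r)) / p = 0 from Nat.div_eq_of_lt (by omega), Nat.add_zero]

lemma colIdx_eq {p : ℕ} (hp : 0 < p) (a : ℕ) {r : ℕ} (hr : r < p) :
    colIdx p a r = (a + (p - 1 - r)) % p := by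
  have hs : a % p < p := Nat.mod_lt a hp
  have ha : p * (a / p) + a % p = a := Nat.div_add_mod a p
  rw [show a + (p - 1 - r) = p * (a / p) + (a % p + (p - 1 - r)) by omega,
    Nat.mul_add_mod]
  unfold colIdx
  split_ifs with h
  · rw [show a % p + (p - 1 - r) = (a % p - 1 - r) + 1 * p by omega,
      Nat.add_mul_mod_self_right, Nat.mod_eq_of_lt (show a % p - 1 - r < p by omega)]
  · rw [Nat.mod_eq_of_lt (show a % p + (p - 1 - r) < p by omega)]
    omega

lemma pair_mono {p m : ℕ} (hp : 0 < p) {x y : QElt p m} (hxy : qle x y) {r : ℕ} (hr : r < p) :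
    toLex ((colLevel p x.2 r, x.1.1 ⟨colIdx p x.2 r % p, Nat.mod_lt _ hp⟩) : ℕ × ℕ)
      ≤ toLex ((colLevel p y.2 r, y.1.1 ⟨colIdx p y.2 r % p, Nat.mod_lt _ hp⟩) : ℕ × ℕ) := by
  rw [Prod.Lex.le_iff]
  have hab := hxy.1
  have hlev : colLevel p x.2 r ≤ colLevel p y.2 r := by
    rw [colLevel_eq hp _ hr, colLevel_eq hp _ hr]
    exact Nat.div_le_div_right (by omega)
  rcases lt_or_eq_of_le hlev with h | h
  · exact Or.inl h
  · refine Or.inr ⟨h, ?_⟩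
    have h1 := Nat.div_add_mod (x.2 + (p - 1 - r)) p
    have h2 := Nat.div_add_mod (y.2 + (p - 1 - r)) p
    have hm1 : (x.2 + (p - 1 - r)) % p < p := Nat.mod_lt _ hp
    have hm2 : (y.2 + (p - 1 - r)) % p < p := Nat.mod_lt _ hp
    have hdiv : (x.2 + (p - 1 - r)) / p = (y.2 + (p - 1 - r)) / p := by
      rw [← colLevel_eq hp _ hr, ← colLevel_eq hp _ hr]; exact h
    rw [hdiv] at h1
    apply hxy.2
    show colIdx p y.2 r % p = colIdx p x.2 r % p + (y.2 - x.2)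
    rw [Nat.mod_eq_of_lt (colIdx_lt hp _ hr), Nat.mod_eq_of_lt (colIdx_lt hp _ hr),
      colIdx_eq hp _ hr, colIdx_eq hp _ hr]
    omega

lemma mono_eq_of_count {γ : Type} [LinearOrder γ] {J : ℕ} {f g : Fin J → γ}
    (hf : Monotone f) (hg : Monotone g)
    (h : ∀ y, (Finset.univ.filter fun i => f i = y).card
      = (Finset.univ.filter fun i => g i = y).card) : f = g := by
  classical
  apply List.ofFn_injective
  refine List.Perm.eq_of_sortedLE hf.sortedLE_ofFn hg.sortedLE_ofFn ?_
  rw [← Multiset.coe_eq_coe]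
  ext y
  have key : ∀ fn : Fin J → γ, Multiset.count y ↑(List.ofFn fn)
      = (Finset.univ.filter fun i => fn i = y).card := by
    intro fn
    rw [List.ofFn_eq_map, ← Multiset.map_coe,
      show ((List.finRange J : List (Fin J)) : Multiset (Fin J)) = Finset.univ.val from rfl,
      Multiset.count_map]
    rw [Finset.card_def, Finset.filter_val]
    exact congrArg Multiset.card (Multiset.filter_congr (fun x _ => eq_comm))
  rw [key, key, h]

lemma prod_monomial_one {k : Type} [CommSemiring k] {ι σ : Type} (s : Finset ι)
    (e : ι → (σ →₀ ℕ)) :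
    ∏ i ∈ s, (monomial (e i) (1 : k)) = monomial (∑ i ∈ s, e i) 1 := by
  classical
  induction s using Finset.cons_induction with
  | empty => simp
  | cons a s ha ih =>
    rw [Finset.prod_cons, Finset.sum_cons, ih, monomial_mul, one_mul]

/-- `ψ` is injective on standard monomials: if two multichains of
`C^q_{p,m}` have the same image under `ψ` (product of the corresponding monomials
in `k[X]`), then they have the same length and are equal. -/
theorem psi_injective_on_standard_monomials (k : Type) [Field k] (p m n q : ℕ)
    (hp : 0 < p) (hm : 0 < m) (hq : q ≤ n * p)
    (j j' : ℕ) (c : Fin j → QElt p m) (c' : Fin j' → QElt p m)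
    (hc : ∀ i, (c i).2 ≤ q) (hc' : ∀ i, (c' i).2 ≤ q)
    (hchain : ∀ i i' : Fin j, i ≤ i' → qle (c i) (c i'))
    (hchain' : ∀ i i' : Fin j', i ≤ i' → qle (c' i) (c' i'))
    (heq : (∏ i : Fin j, psiMono k (c i)) = ∏ i : Fin j', psiMono k (c' i)) :
    ∃ h : j = j', ∀ i : Fin j, c i = c' (Fin.cast h i) := by
  classical
  have hS : (∑ i : Fin j, leadExp (c i).1.1 (c i).2)
      = ∑ i : Fin j', leadExp (c' i).1.1 (c' i).2 := by
    rw [show (∏ i : Fin j, psiMono k (c i))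
        = monomial (∑ i : Fin j, leadExp (c i).1.1 (c i).2) (1 : k) from
        prod_monomial_one _ _,
      show (∏ i : Fin j', psiMono k (c' i))
        = monomial (∑ i : Fin j', leadExp (c' i).1.1 (c' i).2) (1 : k) from
        prod_monomial_one _ _] at heq
    rcases (monomial_eq_monomial_iff _ _ _ _).1 heq with ⟨h, -⟩ | ⟨h, -⟩
    · exact h
    · exact absurd h one_ne_zero
  have hmass : ∀ {J : ℕ} (d : Fin J → QElt p m),
      (∑ i : Fin J, leadExp (d i).1.1 (d i).2).sum (fun _ v => v) = J * p := by
    intro J d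
    rw [← Finsupp.sum_finset_sum_index (fun _ => rfl) (fun _ _ _ => rfl),
      Finset.sum_congr rfl (fun i _ => leadExp_mass hp _ _)]
    simp [mul_comm]
  have hjj : j = j' := by
    have h := congrArg (fun f : (ℕ × ℕ × ℕ) →₀ ℕ => f.sum fun _ v => v) hS
    simp only [hmass] at h
    exact Nat.eq_of_mul_eq_mul_right hp h
  subst hjj
  refine ⟨rfl, fun i => ?_⟩
  have hcnt : ∀ (d : Fin j → QElt p m) {r : ℕ} (hr : r < p) (y0 : ℕ × ℕ),
      ((∑ i : Fin j, leadExp (d i).1.1 (d i).2) (r, y0.2, y0.1)) =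
      (Finset.univ.filter fun i =>
        ((colLevel p (d i).2 r, (d i).1.1 ⟨colIdx p (d i).2 r % p, Nat.mod_lt _ hp⟩) : ℕ × ℕ)
          = y0).card := by
    intro d r hr y0
    rw [Finsupp.finset_sum_apply,
      Finset.sum_congr rfl (fun i _ => leadExp_apply hp _ _ hr _ _),
      ← Finset.card_filter]
    refine congrArg Finset.card (Finset.filter_congr fun i _ => ?_)
    unfold colKey
    rw [Prod.mk.injEq, Prod.mk.injEq, Prod.mk.injEq]
    constructor
    · rintro ⟨-, hv, hl⟩; exact ⟨hl, hv⟩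
    · rintro ⟨hl, hv⟩; exact ⟨rfl, hv, hl⟩
  have hcol : ∀ r : ℕ, r < p → ∀ i : Fin j,
      colLevel p ((c i).2) r = colLevel p ((c' i).2) r ∧
      (c i).1.1 ⟨colIdx p (c i).2 r % p, Nat.mod_lt _ hp⟩
        = (c' i).1.1 ⟨colIdx p (c' i).2 r % p, Nat.mod_lt _ hp⟩ := by
    intro r hr
    have hfg : (fun i : Fin j => toLex ((colLevel p (c i).2 r,
          (c i).1.1 ⟨colIdx p (c i).2 r % p, Nat.mod_lt _ hp⟩) : ℕ × ℕ))
        = (fun i : Fin j => toLex ((colLevel p (c' i).2 r,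
          (c' i).1.1 ⟨colIdx p (c' i).2 r % p, Nat.mod_lt _ hp⟩) : ℕ × ℕ)) := by
      apply mono_eq_of_count
      · intro i i' hii'; exact pair_mono hp (hchain i i' hii') hr
      · intro i i' hii'; exact pair_mono hp (hchain' i i' hii') hr
      · intro y
        have h1 := hcnt c hr (ofLex y)
        have h2 := hcnt c' hr (ofLex y)
        rw [hS] at h1
        have h3 : _ = _ := h1.symm.trans h2
        exact h3
    intro i
    have h := congrFun hfg i
    have h' := toLex.injective h
    exact ⟨congrArg Prod.fst h', congrArg Prod.snd h'⟩
  have hab : (c i).2 = (c' i).2 := by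
    have hsa : (c i).2 % p < p := Nat.mod_lt _ hp
    have hsb : (c' i).2 % p < p := Nat.mod_lt _ hp
    have e1 := (hcol (p - 1) (by omega) i).1
    have e2 := (hcol ((c i).2 % p) hsa i).1
    have e3 := (hcol ((c' i).2 % p) hsb i).1
    have d1 := Nat.div_add_mod (c i).2 p
    have d2 := Nat.div_add_mod (c' i).2 p
    simp only [colLevel] at e1 e2 e3
    have hdiv : (c i).2 / p = (c' i).2 / p := by
      split_ifs at e1 <;> omega
    have hmod : (c i).2 % p = (c' i).2 % p := by
      split_ifs at e2 e3 <;> omega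
    rw [hdiv, hmod] at d1
    omega
  have hrow : ∀ i0 : Fin p, (c i).1.1 i0 = (c' i).1.1 i0 := by
    intro i0
    have hi0 := i0.isLt
    have hsa : (c i).2 % p < p := Nat.mod_lt _ hp
    set r : ℕ := if (c i).2 % p ≤ (i0 : ℕ) then (c i).2 % p + (p - 1 - (i0 : ℕ))
      else (c i).2 % p - 1 - (i0 : ℕ) with hrdef
    have hr : r < p := by rw [hrdef]; split_ifs <;> omega
    have hidx : colIdx p (c i).2 r = (i0 : ℕ) := by
      simp only [colIdx, hrdef]
      split_ifs <;> omega
    have hfin : (⟨colIdx p (c i).2 r % p, Nat.mod_lt _ hp⟩ : Fin p) = i0 := by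
      apply Fin.ext
      show colIdx p (c i).2 r % p = (i0 : ℕ)
      rw [hidx]
      exact Nat.mod_eq_of_lt hi0
    have hfin' : (⟨colIdx p (c' i).2 r % p, Nat.mod_lt _ hp⟩ : Fin p) = i0 := by
      apply Fin.ext
      show colIdx p (c' i).2 r % p = (i0 : ℕ)
      rw [← hab, hidx]
      exact Nat.mod_eq_of_lt hi0
    have hv := (hcol r hr i).2
    rw [hfin, hfin'] at hv
    exact hv
  exact Prod.ext (Subtype.ext (funext hrow)) hab
end

section
/- The coefficient φ(α^{(a)}) of t^a in the α-th maximal minor of M(t) equals the signed sum Σ ε_J · φ(J) over all strictly increasing p-tuples J from {1,...,(n+1)(m+p)} with Σ_i(j_i − i) = a(m+p) + Σ_j(α_j − j) and J ≡ α mod (m+p) as multisets, where φ(J) is the J-th maximal minor of the p×(n+1)(m+p) matrix N obtained by concatenating the coefficient matrices N_0, N_1, ..., N_n of M(t), and ε_J is the sign of the permutation sorting (j_1 mod (m+p), ..., j_p mod (m+p)). -/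
open MvPolynomial

section Aux

open Finset Matrix

lemma coeff_det_aux {R : Type*} [CommRing R] {p n : ℕ} (c : Fin p → Fin p → ℕ → R) (a : ℕ) :
    (Matrix.det (Matrix.of fun i j : Fin p =>
        ∑ l ∈ Finset.range (n + 1), Polynomial.C (c i j l) * Polynomial.X ^ l)).coeff a
    = ∑ r ∈ Fintype.piFinset (fun _ : Fin p => Finset.range (n + 1)),
        if (∑ j, r j) = a then Matrix.det (Matrix.of fun i j => c i j (r j)) else 0 := by
  have h1 : Matrix.det (Matrix.of fun i j : Fin p =>
        ∑ l ∈ Finset.range (n + 1), Polynomial.C (c i j l) * Polynomial.X ^ l)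
      = ∑ r ∈ Fintype.piFinset (fun _ : Fin p => Finset.range (n + 1)),
          Polynomial.C (Matrix.det (Matrix.of fun i j => c i j (r j))) * Polynomial.X ^ (∑ j, r j) := by
    rw [← Matrix.det_transpose]
    have h2 : (Matrix.of fun i j : Fin p =>
        ∑ l ∈ Finset.range (n + 1), Polynomial.C (c i j l) * Polynomial.X ^ l)ᵀ
        = fun j => ∑ l ∈ Finset.range (n + 1), (fun i => Polynomial.C (c i j l) * Polynomial.X ^ l) := by
      funext j i
      simp [Matrix.transpose, Finset.sum_apply]
    rw [show ((Matrix.of fun i j : Fin p =>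
        ∑ l ∈ Finset.range (n + 1), Polynomial.C (c i j l) * Polynomial.X ^ l)ᵀ).det
        = (Matrix.detRowAlternating (R := Polynomial R) (n := Fin p)).toMultilinearMap ((Matrix.of fun i j : Fin p =>
        ∑ l ∈ Finset.range (n + 1), Polynomial.C (c i j l) * Polynomial.X ^ l)ᵀ) from rfl, h2]
    rw [(Matrix.detRowAlternating (R := Polynomial R) (n := Fin p)).toMultilinearMap.map_sum_finset
      (fun j l => fun i => Polynomial.C (c i j l) * Polynomial.X ^ l)
      (fun _ => Finset.range (n + 1))]
    refine Finset.sum_congr rfl fun r _ => ?_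
    have h3 : (fun (j : Fin p) => fun (i : Fin p) => Polynomial.C (c i j (r j)) * Polynomial.X ^ (r j))
        = fun j i => Matrix.of (fun (j i : Fin p) => Polynomial.X ^ (r j) * Polynomial.C (c i j (r j))) j i := by
      funext j i
      exact mul_comm _ _
    rw [h3]
    change (Matrix.of fun (j i : Fin p) => Polynomial.X ^ (r j) * Polynomial.C (c i j (r j))).det = _
    have h5 := Matrix.det_mul_column (fun j : Fin p => Polynomial.X ^ (r j))
      (Matrix.of fun j i : Fin p => Polynomial.C (c i j (r j)))
    rw [show (Matrix.of fun (j i : Fin p) => Polynomial.X ^ (r j) * Polynomial.C (c i j (r j)))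
      = (Matrix.of fun j i => (fun j : Fin p => Polynomial.X ^ (r j)) j
          * (Matrix.of fun j i : Fin p => Polynomial.C (c i j (r j))) j i) from rfl, h5]
    rw [← Matrix.det_transpose (Matrix.of fun j i => Polynomial.C (c i j (r j)))]
    have h4 : ((Matrix.of fun j i : Fin p => Polynomial.C (c i j (r j)))ᵀ)
        = (Polynomial.C : R →+* Polynomial R).mapMatrix (Matrix.of fun i j => c i j (r j)) := rfl
    rw [h4, ← RingHom.map_det, ← Finset.prod_pow_eq_pow_sum]
    ring
  rw [h1, Polynomial.finset_sum_coeff]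
  refine Finset.sum_congr rfl fun r _ => ?_
  rw [Polynomial.coeff_C_mul, Polynomial.coeff_X_pow]
  by_cases h : (∑ j, r j) = a <;> simp [h, Ne.symm]

lemma monotone_multiset_eq {p : ℕ} {f g : Fin p → ℕ} (hf : Monotone f) (hg : Monotone g)
    (h : Multiset.map f Finset.univ.val = Multiset.map g Finset.univ.val) : f = g := by
  rw [show Multiset.map f Finset.univ.val = Finset.univ.val.map f from rfl, Fin.univ_val_map,
    show Multiset.map g Finset.univ.val = Finset.univ.val.map g from rfl, Fin.univ_val_map,
    Multiset.coe_eq_coe] at h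
  exact List.ofFn_injective (List.Perm.eq_of_sortedLE hf.sortedLE_ofFn hg.sortedLE_ofFn h)

lemma multiset_map_perm {p : ℕ} {β : Type*} (h : Fin p → β) (σ : Equiv.Perm (Fin p)) :
    Multiset.map (fun i => h (σ i)) Finset.univ.val = Multiset.map h Finset.univ.val := by
  rw [show (fun i => h (σ i)) = h ∘ σ from rfl, ← Multiset.map_map]
  congr 1
  simpa using congrArg Finset.val (Finset.map_univ_equiv σ)

lemma step2 {R : Type*} [CommRing R] {p q n : ℕ} (hq : 0 < q)
    (α : Fin p → ℕ) (hα : StrictMono α) (hbd : ∀ i, α i < q) (a : ℕ)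
    (x : Fin p → ℕ → ℕ → R) :
    ∑ l ∈ (Fintype.piFinset (fun _ : Fin p => Finset.range (n + 1))).filter
        (fun l => (∑ j, l j) = a),
      Matrix.det (Matrix.of fun i j : Fin p => x i (α j) (l j))
    = ∑ J ∈ Finset.univ.filter (fun J : Fin p → Fin ((n + 1) * q) =>
        (∀ i j : Fin p, i < j → J i < J j) ∧
        (∑ i : Fin p, (J i : ℕ)) = a * q + ∑ i : Fin p, α i ∧
        Multiset.map (fun i : Fin p => (J i : ℕ) % q) Finset.univ.val =
          Multiset.map (fun i : Fin p => α i % q) Finset.univ.val),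
      ((Equiv.Perm.sign (Tuple.sort fun i : Fin p => (J i : ℕ) % q) : ℤ) •
        Matrix.det (Matrix.of fun i j : Fin p =>
          x i ((J j : ℕ) % q) ((J j : ℕ) / q))) := by
  classical
  set Kv : (Fin p → ℕ) → Fin p → ℕ := fun l j => l j * q + α j with hKv
  have hαq : ∀ i, α i % q = α i := fun i => Nat.mod_eq_of_lt (hbd i)
  have hKmod : ∀ l j, Kv l j % q = α j := fun l j => by
    show (l j * q + α j) % q = α j
    rw [add_comm, Nat.add_mul_mod_self_right, hαq]
  have hKdiv : ∀ l j, Kv l j / q = l j := fun l j => by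
    show (l j * q + α j) / q = l j
    rw [add_comm, Nat.add_mul_div_right _ _ hq, Nat.div_eq_of_lt (hbd j), Nat.zero_add]
  have hKinj : ∀ l : Fin p → ℕ, Function.Injective (Kv l) := by
    intro l j j' h
    have h2 := congrArg (· % q) h
    simp only [hKmod] at h2
    exact hα.injective h2
  have hsortK : ∀ l : Fin p → ℕ, StrictMono (fun i => Kv l (Tuple.sort (Kv l) i)) := fun l =>
    (Tuple.monotone_sort (Kv l)).strictMono_of_injective
      ((hKinj l).comp (Equiv.injective _))
  have hsortα : ∀ τ : Equiv.Perm (Fin p), Tuple.sort (fun i => α (τ i)) = τ⁻¹ := by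
    intro τ
    symm
    rw [Tuple.eq_sort_iff]
    constructor
    · have e : (fun i => α (τ i)) ∘ ⇑τ⁻¹ = α := by
        funext i; simp
      rw [e]; exact hα.monotone
    · intro i j hij hf
      simp only [Function.comp, Equiv.Perm.inv_def, Equiv.apply_symm_apply] at hf
      exact ((hij.ne (hα.injective hf))).elim
  have hmodα : ∀ J : Fin p → Fin ((n + 1) * q),
      (Multiset.map (fun i => (J i : ℕ) % q) Finset.univ.val =
        Multiset.map (fun i => α i % q) Finset.univ.val) →
      ∀ j, (J (Tuple.sort (fun i => (J i : ℕ) % q) j) : ℕ) % q = α j := by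
    intro J hmul
    have h1 : Monotone (fun j => (J (Tuple.sort (fun i => (J i : ℕ) % q) j) : ℕ) % q) :=
      Tuple.monotone_sort (fun i => (J i : ℕ) % q)
    have h2 : Multiset.map (fun j => (J (Tuple.sort (fun i => (J i : ℕ) % q) j) : ℕ) % q)
        Finset.univ.val = Multiset.map α Finset.univ.val := by
      rw [multiset_map_perm (fun i => (J i : ℕ) % q) (Tuple.sort (fun i => (J i : ℕ) % q)),
        hmul]
      exact Multiset.map_congr rfl (fun i _ => hαq i)
    exact fun j => congrFun (monotone_multiset_eq h1 hα.monotone h2) j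
  have hbound : ∀ l : Fin p → ℕ, l ∈ (Fintype.piFinset fun _ : Fin p => Finset.range (n + 1)) →
      ∀ i, Kv l i < (n + 1) * q := by
    intro l hl i
    have h1 : l i ≤ n := Nat.lt_succ_iff.mp (Finset.mem_range.mp (Fintype.mem_piFinset.mp hl i))
    have h2 : l i * q ≤ n * q := Nat.mul_le_mul_right q h1
    have := hbd i
    show l i * q + α i < (n + 1) * q
    nlinarith
  refine Finset.sum_bij'
    (i := fun l hl => fun i => (⟨Kv l (Tuple.sort (Kv l) i),
      hbound l (Finset.mem_filter.mp hl).1 _⟩ : Fin ((n + 1) * q)))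
    (j := fun J _ => fun j => (J (Tuple.sort (fun i => (J i : ℕ) % q) j) : ℕ) / q)
    ?_ ?_ ?_ ?_ ?_
  · -- hi : image lands in target filter
    intro l hl
    obtain ⟨hl1, hl2⟩ := Finset.mem_filter.mp hl
    refine Finset.mem_filter.mpr ⟨Finset.mem_univ _, ?_, ?_, ?_⟩
    · intro i j hij
      exact Fin.mk_lt_mk.mpr (hsortK l hij)
    · show ∑ i, Kv l (Tuple.sort (Kv l) i) = a * q + ∑ i, α i
      rw [Equiv.sum_comp (Tuple.sort (Kv l)) (Kv l)]
      show ∑ j, (l j * q + α j) = _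
      rw [Finset.sum_add_distrib, ← Finset.sum_mul, hl2]
    · show Multiset.map (fun i => Kv l (Tuple.sort (Kv l) i) % q) Finset.univ.val = _
      have e1 : (fun i => Kv l (Tuple.sort (Kv l) i) % q) = fun i => α (Tuple.sort (Kv l) i) :=
        funext fun i => hKmod l _
      rw [e1, multiset_map_perm α (Tuple.sort (Kv l))]
      exact (Multiset.map_congr rfl (fun i _ => hαq i)).symm
  · -- hj : preimage lands in source filter
    intro J hJ
    obtain ⟨-, hJ1, hJ2, hJ3⟩ := Finset.mem_filter.mp hJ
    have hmodsum : ∑ i, ((J i : ℕ) % q) = ∑ i, α i := by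
      rw [Finset.sum_eq_multiset_sum, Finset.sum_eq_multiset_sum, hJ3]
      exact congrArg Multiset.sum (Multiset.map_congr rfl fun i _ => hαq i)
    have h0 : ∑ i, (J i : ℕ) = q * (∑ i, (J i : ℕ) / q) + ∑ i, ((J i : ℕ) % q) := by
      rw [Finset.mul_sum, ← Finset.sum_add_distrib]
      exact Finset.sum_congr rfl fun i _ => (Nat.div_add_mod _ q).symm
    have hdsum : ∑ i, (J i : ℕ) / q = a := by
      have h3 : q * (∑ i, (J i : ℕ) / q) = q * a := by
        have := h0.symm.trans hJ2
        rw [hmodsum] at this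
        rw [Nat.mul_comm q a]
        omega
      exact Nat.eq_of_mul_eq_mul_left hq h3
    refine Finset.mem_filter.mpr ⟨Fintype.mem_piFinset.mpr fun j => ?_, ?_⟩
    · exact Finset.mem_range.mpr ((Nat.div_lt_iff_lt_mul hq).mpr (J _).isLt)
    · rw [Equiv.sum_comp (Tuple.sort (fun i => (J i : ℕ) % q)) (fun i => (J i : ℕ) / q)]
      exact hdsum
  · -- left_inv
    intro l hl
    funext j
    show Kv l (Tuple.sort (Kv l)
      (Tuple.sort (fun i => Kv l (Tuple.sort (Kv l) i) % q) j)) / q = l j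
    have e1 : (fun i => Kv l (Tuple.sort (Kv l) i) % q) = fun i => α (Tuple.sort (Kv l) i) :=
      funext fun i => hKmod l _
    rw [e1, hsortα (Tuple.sort (Kv l)), Equiv.Perm.inv_def, Equiv.apply_symm_apply, hKdiv]
  · -- right_inv
    intro J hJ
    obtain ⟨-, hJ1, hJ2, hJ3⟩ := Finset.mem_filter.mp hJ
    have hJs : StrictMono (fun i => (J i : ℕ)) := fun i j hij => hJ1 i j hij
    set σ := Tuple.sort (fun i : Fin p => (J i : ℕ) % q) with hσ
    have hm : ∀ j, (J (σ j) : ℕ) % q = α j := hmodα J hJ3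
    set G : Fin p → ℕ := fun j => (J (σ j) : ℕ) / q with hG
    have hKvG : Kv G = fun j => (J (σ j) : ℕ) := by
      funext j
      show (J (σ j) : ℕ) / q * q + α j = (J (σ j) : ℕ)
      rw [← hm j]
      exact Nat.div_add_mod' _ q
    set τ' := Tuple.sort (Kv G) with hτ'
    have hmono : Monotone (fun i => (J (σ (τ' i)) : ℕ)) := by
      have h := Tuple.monotone_sort (Kv G)
      have e : (Kv G ∘ ⇑(Tuple.sort (Kv G))) = fun i => (J (σ (τ' i)) : ℕ) := by
        rw [← hτ']
        exact funext fun i => congrFun hKvG (τ' i)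
      rwa [e] at h
    have hcompinj : Function.Injective (fun i => (J (σ (τ' i)) : ℕ)) :=
      hJs.injective.comp ((Equiv.injective σ).comp (Equiv.injective τ'))
    have hsm : StrictMono (fun i => (J (σ (τ' i)) : ℕ)) :=
      hmono.strictMono_of_injective hcompinj
    have hperm : StrictMono (fun i => σ (τ' i)) := fun i j hij => hJs.lt_iff_lt.mp (hsm hij)
    have hid : (fun i => σ (τ' i)) = id := by
      have hr : Set.range (fun i => σ (τ' i)) = Set.range (id : Fin p → Fin p) := by
        rw [Set.range_id]
        exact Set.range_eq_univ.mpr fun b => ⟨τ'⁻¹ (σ⁻¹ b), by simp⟩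
      haveI : WellFoundedLT (Fin p) := inferInstance
      exact (StrictMono.range_inj (f := fun i => σ (τ' i)) (g := id) hperm strictMono_id).mp hr
    funext i
    apply Fin.ext
    show Kv G (τ' i) = (J i : ℕ)
    rw [congrFun hKvG (τ' i)]
    exact congrArg (fun z : Fin p => (J z : ℕ)) (congrFun hid i)
  · -- term equality
    intro l hl
    show Matrix.det (Matrix.of fun i j : Fin p => x i (α j) (l j))
      = (Equiv.Perm.sign (Tuple.sort fun i => Kv l (Tuple.sort (Kv l) i) % q) : ℤ) •
        Matrix.det (Matrix.of fun i j : Fin p =>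
          x i (Kv l (Tuple.sort (Kv l) j) % q) (Kv l (Tuple.sort (Kv l) j) / q))
    have e1 : (fun i => Kv l (Tuple.sort (Kv l) i) % q) = fun i => α (Tuple.sort (Kv l) i) :=
      funext fun i => hKmod l _
    have e2 : (Matrix.of fun i j : Fin p =>
          x i (Kv l (Tuple.sort (Kv l) j) % q) (Kv l (Tuple.sort (Kv l) j) / q))
        = (Matrix.of fun i j : Fin p => x i (α j) (l j)).submatrix id (Tuple.sort (Kv l)) := by
      ext i j
      simp only [Matrix.of_apply, Matrix.submatrix_apply, id_eq, hKmod, hKdiv]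
    rw [e1, hsortα (Tuple.sort (Kv l)), e2, Matrix.det_permute', Equiv.Perm.sign_inv]
    rcases Int.units_eq_one_or (Equiv.Perm.sign (Tuple.sort (Kv l))) with h | h <;> rw [h] <;> simp

end Aux

/-- the coefficient `φ(α^{(a)})` of `t^a` in the `α`-th maximal minor of
`M(t)` equals the signed sum `Σ ε_J φ(J)` over strictly increasing `p`-tuples `J` of
columns of the concatenated matrix `N = [N_0 | ⋯ | N_n]` with `|J| = |α^{(a)}|`
(equivalently `Σ J_i = a(m+p) + Σ α_i`) and `J ≡ α mod (m+p)` as multisets, where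
`φ(J)` is the `J`-th maximal minor of `N` and `ε_J` is the sign of the permutation
sorting `(j_1 mod (m+p), …, j_p mod (m+p))`.  (All indices 0-based; the column `c`
of `N` carries the variable `x_{i, c mod (m+p)}^{(c div (m+p))}`.) -/
theorem minor_coeff_expansion (k : Type) [Field k] (p m n : ℕ)
    (hp : 0 < p) (hm : 0 < m)
    (α : Fin p → ℕ) (hα : StrictMono α) (hbd : ∀ i, α i < m + p)
    (a : ℕ) (ha : a ≤ n * p) :
    Polynomial.coeff
      (Matrix.det (Matrix.of fun i j : Fin p =>
        ∑ l ∈ Finset.range (n + 1),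
          Polynomial.C (X ((i : ℕ), α j, l) : MvPolynomial (ℕ × ℕ × ℕ) k) *
            Polynomial.X ^ l)) a =
    ∑ J ∈ Finset.univ.filter (fun J : Fin p → Fin ((n + 1) * (m + p)) =>
        (∀ i j : Fin p, i < j → J i < J j) ∧
        (∑ i : Fin p, (J i : ℕ)) = a * (m + p) + ∑ i : Fin p, α i ∧
        Multiset.map (fun i : Fin p => (J i : ℕ) % (m + p)) Finset.univ.val =
          Multiset.map (fun i : Fin p => α i % (m + p)) Finset.univ.val),
      ((Equiv.Perm.sign (Tuple.sort fun i : Fin p => (J i : ℕ) % (m + p)) : ℤ) •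
        Matrix.det (Matrix.of fun i j : Fin p =>
          (X ((i : ℕ), (J j : ℕ) % (m + p), (J j : ℕ) / (m + p)) :
            MvPolynomial (ℕ × ℕ × ℕ) k))) := by
  rw [coeff_det_aux (fun (i j : Fin p) (l : ℕ) =>
    (X ((i : ℕ), α j, l) : MvPolynomial (ℕ × ℕ × ℕ) k)) a, ← Finset.sum_filter]
  exact step2 (by omega : 0 < m + p) α hα hbd a (fun i r l => X ((i : ℕ), r, l))
end
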